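/- arXiv:2403.06079 — 4 statements merged into one kernel-verified Lean document; each statement's English description precedes it below -/
import Mathlib

section
/- For probability measures μ and ν on a measurable space, TV(μ, ν) ≤ sqrt((1/2) · D_KL(μ‖ν)). -/
open MeasureTheory ENNReal
open scoped Classical

/-- Total variation distance: `sup_A (μ(A) - ν(A))` over measurable sets. -/
noncomputable def tvDist {X : Type*} [MeasurableSpace X] (μ ν : Measure X) : ℝ≥0∞ :=
  ⨆ (A : Set X) (_ : MeasurableSet A), μ A - ν A

/-- 1-Wasserstein distance: infimum over couplings of the expected distance. -/
noncomputable def W1 {X : Type*} [MeasurableSpace X] [PseudoEMetricSpace X]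
    (μ ν : Measure X) : ℝ≥0∞ :=
  ⨅ (π : Measure (X × X)) (_ : π.map Prod.fst = μ ∧ π.map Prod.snd = ν),
    ∫⁻ p, edist p.1 p.2 ∂π

/-- Kullback–Leibler divergence: `∫ log (dμ/dν) dμ` if `μ ≪ ν` (and the
log-likelihood ratio is integrable), `∞` otherwise. -/
noncomputable def klDiv {X : Type*} [MeasurableSpace X] (μ ν : Measure X) : ℝ≥0∞ :=
  if μ ≪ ν ∧ Integrable (fun x => Real.log ((μ.rnDeriv ν x).toReal)) μ
  then ENNReal.ofReal (∫ x, Real.log ((μ.rnDeriv ν x).toReal) ∂μ)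
  else ⊤

/-- `exp(-D)` for an extended-nonnegative-real `D`, with `exp(-∞) = 0`. -/
noncomputable def expNeg (D : ℝ≥0∞) : ℝ≥0∞ :=
  if D = ⊤ then 0 else ENNReal.ofReal (Real.exp (-D.toReal))

noncomputable def phi (x : ℝ) : ℝ := x * Real.log x - x + 1 - (3/2) * ((x-1)^2 / (x+2))
noncomputable def psi (x : ℝ) : ℝ := Real.log x - (3/2) * ((x-1)*(x+5) / (x+2)^2)

lemma hasDerivAt_phi {x : ℝ} (hx : 0 < x) : HasDerivAt phi (psi x) x := by
  have hne : x + 2 ≠ 0 := by positivity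
  have h1 : HasDerivAt (fun x : ℝ => x * Real.log x) (Real.log x + 1) x :=
    Real.hasDerivAt_mul_log hx.ne'
  have h2 : HasDerivAt (fun x : ℝ => (x-1)^2) (2*(x-1)) x := by
    simpa using ((hasDerivAt_id x).sub_const 1).fun_pow 2
  have h3 : HasDerivAt (fun x : ℝ => x + 2) 1 x := (hasDerivAt_id x).add_const 2
  have h4 : HasDerivAt (fun x : ℝ => (x-1)^2 / (x+2))
      ((2*(x-1)*(x+2) - (x-1)^2 * 1)/(x+2)^2) x := h2.div h3 hne
  have h5 := ((h1.sub (hasDerivAt_id x)).add_const 1).sub (h4.const_mul (3/2))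
  refine h5.congr_deriv ?_
  unfold psi
  field_simp
  ring

lemma hasDerivAt_psi {x : ℝ} (hx : 0 < x) : HasDerivAt psi (1/x - 27/(x+2)^3) x := by
  have hne : x + 2 ≠ 0 := by positivity
  have hne2 : (x + 2)^2 ≠ 0 := pow_ne_zero _ hne
  have h1 : HasDerivAt Real.log x⁻¹ x := Real.hasDerivAt_log hx.ne'
  have h2 : HasDerivAt (fun x : ℝ => (x-1)*(x+5)) ((x-1) + (x+5)) x := by
    simpa [mul_comm, add_comm] using
      (((hasDerivAt_id x).sub_const 1).fun_mul ((hasDerivAt_id x).add_const 5))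
  have h3 : HasDerivAt (fun x : ℝ => (x+2)^2) (2*(x+2)) x := by
    simpa using ((hasDerivAt_id x).add_const 2).fun_pow 2
  have h4 := h2.div h3 hne2
  have h5 := h1.sub (h4.const_mul (3/2))
  refine h5.congr_deriv ?_
  field_simp
  ring

lemma phi_nonneg {x : ℝ} (hx : 0 ≤ x) : 0 ≤ phi x := by
  rcases eq_or_lt_of_le hx with rfl | hx
  · norm_num [phi, Real.log_zero]
  have psi_one : psi 1 = 0 := by norm_num [psi]
  have phi_one : phi 1 = 0 := by norm_num [phi]
  have hpsimono : MonotoneOn psi (Set.Ioi (0:ℝ)) := by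
    apply monotoneOn_of_deriv_nonneg (convex_Ioi 0)
    · exact fun y hy => (hasDerivAt_psi hy).differentiableAt.continuousAt.continuousWithinAt
    · rw [interior_Ioi]
      exact fun y hy => (hasDerivAt_psi hy).differentiableAt.differentiableWithinAt
    · rw [interior_Ioi]
      intro y hy
      replace hy : (0:ℝ) < y := hy
      rw [(hasDerivAt_psi hy).deriv]
      have h2 : (0:ℝ) < (y+2)^3 := by positivity
      rw [sub_nonneg, div_le_div_iff₀ h2 hy]
      nlinarith [mul_nonneg (sq_nonneg (y-1)) (by linarith : (0:ℝ) ≤ y + 8)]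
  rcases le_or_gt 1 x with h1 | h1
  · have hmono : MonotoneOn phi (Set.Ici (1:ℝ)) := by
      apply monotoneOn_of_deriv_nonneg (convex_Ici 1)
      · exact fun y hy => (hasDerivAt_phi (lt_of_lt_of_le one_pos hy)).differentiableAt.continuousAt.continuousWithinAt
      · rw [interior_Ici]
        exact fun y hy => (hasDerivAt_phi (lt_trans one_pos hy)).differentiableAt.differentiableWithinAt
      · rw [interior_Ici]
        intro y hy
        have hy0 : (0:ℝ) < y := lt_trans one_pos hy
        rw [(hasDerivAt_phi hy0).deriv]
        calc (0:ℝ) = psi 1 := psi_one.symm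
          _ ≤ psi y := hpsimono (Set.mem_Ioi.2 one_pos) (Set.mem_Ioi.2 hy0) hy.le
    calc (0:ℝ) = phi 1 := phi_one.symm
      _ ≤ phi x := hmono Set.self_mem_Ici (Set.mem_Ici.2 h1) h1
  · have hanti : AntitoneOn phi (Set.Icc x 1) := by
      apply antitoneOn_of_deriv_nonpos (convex_Icc x 1)
      · intro y hy
        exact (hasDerivAt_phi (lt_of_lt_of_le hx hy.1)).differentiableAt.continuousAt.continuousWithinAt
      · rw [interior_Icc]
        exact fun y hy => (hasDerivAt_phi (lt_trans hx hy.1)).differentiableAt.differentiableWithinAt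
      · rw [interior_Icc]
        intro y hy
        have hy0 : (0:ℝ) < y := lt_trans hx hy.1
        rw [(hasDerivAt_phi hy0).deriv]
        calc psi y ≤ psi 1 := hpsimono (Set.mem_Ioi.2 hy0) (Set.mem_Ioi.2 one_pos) hy.2.le
          _ = 0 := psi_one
    calc (0:ℝ) = phi 1 := phi_one.symm
      _ ≤ phi x := hanti (Set.mem_Icc.2 ⟨le_refl x, h1.le⟩) (Set.mem_Icc.2 ⟨h1.le, le_refl 1⟩) h1.le

lemma pointwise_key {x : ℝ} (hx : 0 ≤ x) :
    (x - 1)^2 / (x + 2) ≤ (2/3) * (x * Real.log x - x + 1) := by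
  have := phi_nonneg hx
  unfold phi at this
  linarith

/-- Pinsker's inequality: TV(μ,ν) ≤ sqrt((1/2)·D_KL(μ‖ν)). -/
theorem pinsker {X : Type*} [MeasurableSpace X] (μ ν : Measure X)
    [IsProbabilityMeasure μ] [IsProbabilityMeasure ν] :
    tvDist μ ν ≤ (klDiv μ ν / 2) ^ (1/2 : ℝ) := by
  by_cases hc : μ ≪ ν ∧ Integrable (fun x => Real.log ((μ.rnDeriv ν x).toReal)) μ
  case neg =>
    rw [klDiv, if_neg hc, ENNReal.top_div_of_ne_top (by norm_num),
      ENNReal.top_rpow_of_pos (by norm_num)]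
    exact le_top
  obtain ⟨hμν, hint⟩ := hc
  set f : X → ℝ := fun x => (μ.rnDeriv ν x).toReal with hf
  have hf_meas : Measurable f := (Measure.measurable_rnDeriv μ ν).ennreal_toReal
  have hf_nonneg : ∀ x, 0 ≤ f x := fun x => ENNReal.toReal_nonneg
  have int_f : Integrable f ν := Measure.integrable_toReal_rnDeriv
  have hfint1 : ∫ x, f x ∂ν = 1 := by
    rw [hf, Measure.integral_toReal_rnDeriv hμν]; simp
  set D : ℝ := ∫ x, Real.log ((μ.rnDeriv ν x).toReal) ∂μ with hD
  have int_flogf : Integrable (fun x => f x * Real.log (f x)) ν := by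
    have := (integrable_rnDeriv_smul_iff (f := fun x => Real.log (f x)) hμν).2 hint
    simpa [smul_eq_mul] using this
  have hDf : D = ∫ x, f x * Real.log (f x) ∂ν := by
    rw [hD, ← integral_rnDeriv_smul (f := fun x => Real.log (f x)) hμν]
    simp [smul_eq_mul]; rfl
  set g : X → ℝ := fun x => f x * Real.log (f x) - f x + 1 with hg
  have int_g : Integrable g ν := (int_flogf.sub int_f).add (integrable_const 1)
  have hint_g : ∫ x, g x ∂ν = D := by
    have e1 : ∫ x, g x ∂ν = (∫ x, (f x * Real.log (f x) - f x) ∂ν) + ∫ x, (1:ℝ) ∂ν :=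
      integral_add (int_flogf.sub int_f) (integrable_const 1)
    have e2 : ∫ x, (f x * Real.log (f x) - f x) ∂ν
        = (∫ x, f x * Real.log (f x) ∂ν) - ∫ x, f x ∂ν := integral_sub int_flogf int_f
    rw [e1, e2, hfint1, integral_const]
    simp [hDf]
  set q : X → ℝ := fun x => (f x - 1)^2 / (f x + 2) with hq
  have hq_nonneg : ∀ x, 0 ≤ q x := fun x => div_nonneg (sq_nonneg _) (by linarith [hf_nonneg x])
  have hq_le : ∀ x, q x ≤ (2/3) * g x := fun x => pointwise_key (hf_nonneg x)
  have int_q : Integrable q ν := by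
    apply Integrable.mono' (int_g.const_mul (2/3))
      (((hf_meas.sub measurable_const).pow_const 2 |>.div
        (hf_meas.add measurable_const)).aestronglyMeasurable)
    filter_upwards with x
    change ‖q x‖ ≤ _
    rw [Real.norm_eq_abs, abs_of_nonneg (hq_nonneg x)]
    exact hq_le x
  set a : ℝ := ∫ x, q x ∂ν with ha_def
  have ha : a ≤ (2/3) * D := by
    calc a ≤ ∫ x, (2/3) * g x ∂ν := integral_mono int_q (int_g.const_mul _) hq_le
      _ = (2/3) * D := by rw [integral_const_mul, hint_g]
  have ha_nonneg : 0 ≤ a := integral_nonneg hq_nonneg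
  have hD_nonneg : 0 ≤ D := by linarith
  -- Cauchy-Schwarz
  set T : ℝ := ∫ x, |f x - 1| ∂ν with hT_def
  have int_abs : Integrable (fun x => |f x - 1|) ν := (int_f.sub (integrable_const 1)).abs
  have int_f2 : Integrable (fun x => f x + 2) ν := int_f.add (integrable_const 2)
  have hf2int : ∫ x, (f x + 2) ∂ν = 3 := by
    rw [integral_add int_f (integrable_const 2), hfint1, integral_const]; simp; norm_num
  have hCS : T ≤ Real.sqrt a * Real.sqrt 3 := by
    have key : ENNReal.ofReal T ≤ ENNReal.ofReal (Real.sqrt a * Real.sqrt 3) := by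
      rw [hT_def, ofReal_integral_eq_lintegral_ofReal int_abs
        (Filter.Eventually.of_forall fun x => abs_nonneg _)]
      have hpt : ∀ x, ENNReal.ofReal |f x - 1|
          = ENNReal.ofReal (q x) ^ (1/2:ℝ) * ENNReal.ofReal (f x + 2) ^ (1/2:ℝ) := by
        intro x
        have h2 : (0:ℝ) < f x + 2 := by linarith [hf_nonneg x]
        rw [ENNReal.ofReal_rpow_of_nonneg (hq_nonneg x) (by norm_num),
          ENNReal.ofReal_rpow_of_nonneg h2.le (by norm_num),
          ← ENNReal.ofReal_mul (by positivity)]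
        congr 1
        rw [← Real.sqrt_eq_rpow, ← Real.sqrt_eq_rpow, ← Real.sqrt_mul (hq_nonneg x),
          show q x * (f x + 2) = (f x - 1)^2 from div_mul_cancel₀ _ h2.ne',
          Real.sqrt_sq_eq_abs]
      calc ∫⁻ x, ENNReal.ofReal |f x - 1| ∂ν
          = ∫⁻ x, ENNReal.ofReal (q x) ^ (1/2:ℝ) * ENNReal.ofReal (f x + 2) ^ (1/2:ℝ) ∂ν := by
            simp_rw [hpt]
        _ ≤ (∫⁻ x, ENNReal.ofReal (q x) ∂ν) ^ (1/2:ℝ) * (∫⁻ x, ENNReal.ofReal (f x + 2) ∂ν) ^ (1/2:ℝ) :=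
            ENNReal.lintegral_mul_norm_pow_le
              (ENNReal.measurable_ofReal.comp ((hf_meas.sub measurable_const).pow_const 2 |>.div
                (hf_meas.add measurable_const))).aemeasurable
              (ENNReal.measurable_ofReal.comp (hf_meas.add measurable_const)).aemeasurable
              (by norm_num) (by norm_num) (by norm_num)
        _ = ENNReal.ofReal a ^ (1/2:ℝ) * ENNReal.ofReal 3 ^ (1/2:ℝ) := by
            rw [← ofReal_integral_eq_lintegral_ofReal int_q
              (Filter.Eventually.of_forall hq_nonneg),
              ← ofReal_integral_eq_lintegral_ofReal int_f2
              (Filter.Eventually.of_forall fun x => by simp only [Pi.zero_apply]; linarith [hf_nonneg x]), hf2int]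
        _ = ENNReal.ofReal (Real.sqrt a * Real.sqrt 3) := by
            rw [ENNReal.ofReal_rpow_of_nonneg ha_nonneg (by norm_num),
              ENNReal.ofReal_rpow_of_nonneg (by norm_num) (by norm_num),
              ← ENNReal.ofReal_mul (by positivity), ← Real.sqrt_eq_rpow, ← Real.sqrt_eq_rpow]
    have := (ENNReal.ofReal_le_ofReal_iff (by positivity)).1 key
    exact this
  have hT2 : T^2 ≤ 2 * D := by
    have h1 : T^2 ≤ (Real.sqrt a * Real.sqrt 3)^2 := by
      apply pow_le_pow_left₀ (integral_nonneg fun x => abs_nonneg _) hCS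
    have h2 : (Real.sqrt a * Real.sqrt 3)^2 = a * 3 := by
      rw [mul_pow, Real.sq_sqrt ha_nonneg, Real.sq_sqrt (by norm_num)]
    nlinarith
  -- per-set bound
  rw [tvDist]
  refine iSup_le fun A => iSup_le fun hA => ?_
  set p : ℝ := (μ A).toReal
  set r : ℝ := (ν A).toReal
  have int_fm1 : Integrable (fun x => f x - 1) ν := int_f.sub (integrable_const 1)
  have hIA : ∫ x in A, (f x - 1) ∂ν = p - r := by
    rw [integral_sub int_f.integrableOn (integrableOn_const (measure_ne_top ν A)),
      hf, Measure.setIntegral_toReal_rnDeriv hμν A]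
    simp [r, Measure.restrict_apply_univ]; rfl
  have htot : ∫ x in A, (f x - 1) ∂ν + ∫ x in Aᶜ, (f x - 1) ∂ν = 0 := by
    rw [integral_add_compl hA int_fm1, integral_sub int_f (integrable_const 1), hfint1]
    simp
  have hb1 : ∫ x in A, (f x - 1) ∂ν ≤ ∫ x in A, |f x - 1| ∂ν :=
    integral_mono int_fm1.integrableOn int_abs.integrableOn fun x => le_abs_self _
  have hb2 : -∫ x in Aᶜ, (f x - 1) ∂ν ≤ ∫ x in Aᶜ, |f x - 1| ∂ν := by
    rw [← integral_neg]
    exact integral_mono int_fm1.neg.integrableOn int_abs.integrableOn fun x => neg_le_abs _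
  have hsplit : ∫ x in A, |f x - 1| ∂ν + ∫ x in Aᶜ, |f x - 1| ∂ν = T :=
    integral_add_compl hA int_abs
  have hkey : p - r ≤ Real.sqrt (D / 2) := by
    have hpr : 2 * (p - r) ≤ T := by
      have : p - r = ∫ x in A, (f x - 1) ∂ν := hIA.symm
      linarith [hb1, hb2, hsplit, htot, hIA]
    rcases le_or_gt (p - r) 0 with h | h
    · exact le_trans h (Real.sqrt_nonneg _)
    · rw [Real.le_sqrt h.le (by positivity)]
      nlinarith
  rw [klDiv, if_pos ⟨hμν, hint⟩, ← hD]
  have hrw : (ENNReal.ofReal D / 2) ^ (1/2:ℝ) = ENNReal.ofReal (Real.sqrt (D/2)) := by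
    rw [show ((2:ℝ≥0∞)) = ENNReal.ofReal 2 by simp,
      ← ENNReal.ofReal_div_of_pos two_pos,
      ENNReal.ofReal_rpow_of_nonneg (by positivity) (by norm_num), ← Real.sqrt_eq_rpow]
  rw [hrw, tsub_le_iff_right]
  calc μ A = ENNReal.ofReal p := (ENNReal.ofReal_toReal (measure_ne_top μ A)).symm
    _ ≤ ENNReal.ofReal (Real.sqrt (D/2) + r) := ENNReal.ofReal_le_ofReal (by linarith)
    _ = ENNReal.ofReal (Real.sqrt (D/2)) + ENNReal.ofReal r :=
        ENNReal.ofReal_add (Real.sqrt_nonneg _) ENNReal.toReal_nonneg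
    _ = ENNReal.ofReal (Real.sqrt (D/2)) + ν A := by
        rw [ENNReal.ofReal_toReal (measure_ne_top ν A)]
end

section
/- For probability measures μ and ν, TV(μ, ν) ≤ sqrt(min((1/2)·D_KL(μ‖ν), 1 − exp(−D_KL(μ‖ν)))). -/
open MeasureTheory ENNReal
open scoped Classical

namespace PinskerAux

/-- Auxiliary function for the Bernoulli Pinsker inequality. -/
noncomputable def F (p q : ℝ) : ℝ :=
  -(p * Real.log q) - (1-p) * Real.log (1-q) - 2*(p-q)^2

lemma hasDerivAt_F (p : ℝ) {x : ℝ} (hx0 : 0 < x) (hx1 : x < 1) :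
    HasDerivAt (F p) (-(p/x) + (1-p)/(1-x) + 4*(p-x)) x := by
  have h1 : HasDerivAt (fun q : ℝ => -(p * Real.log q)) (-(p * x⁻¹)) x :=
    ((Real.hasDerivAt_log hx0.ne').const_mul p).neg
  have hinner : HasDerivAt (fun q : ℝ => 1 - q) (-1) x := by
    simpa using (hasDerivAt_id x).const_sub 1
  have h2 : HasDerivAt (fun q : ℝ => (1-p) * Real.log (1-q)) ((1-p) * ((1-x)⁻¹ * -1)) x :=
    ((Real.hasDerivAt_log (by linarith : (1:ℝ) - x ≠ 0)).comp x hinner).const_mul (1-p)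
  have hinner2 : HasDerivAt (fun q : ℝ => p - q) (-1) x := by
    simpa using (hasDerivAt_id x).const_sub p
  have h3 : HasDerivAt (fun q : ℝ => 2*(p-q)^2) (2*(((2:ℕ):ℝ) * (p-x)^(2-1) * -1)) x :=
    (hinner2.pow 2).const_mul 2
  have := (h1.sub h2).sub h3
  have hx0' : x ≠ 0 := hx0.ne'
  have hx1' : (1:ℝ) - x ≠ 0 := by linarith
  refine this.congr_deriv ?_
  ring

lemma deriv_F_eq (p : ℝ) {x : ℝ} (hx0 : 0 < x) (hx1 : x < 1) :
    -(p/x) + (1-p)/(1-x) + 4*(p-x) = (x-p)*(2*x-1)^2 / (x*(1-x)) := by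
  have hx0' : x ≠ 0 := hx0.ne'
  have hx1' : (1:ℝ) - x ≠ 0 := by linarith
  field_simp
  ring

lemma F_mono {p q : ℝ} (hp : 0 ≤ p) (hpq : p ≤ q) (hq1 : q < 1) : F p p ≤ F p q := by
  rcases eq_or_lt_of_le hpq with rfl | hlt
  · exact le_rfl
  have hcont : ContinuousOn (F p) (Set.Icc p q) := by
    have c2 : ContinuousOn (fun q' : ℝ => (1-p) * Real.log (1-q')) (Set.Icc p q) := by
      refine ContinuousOn.mul continuousOn_const ?_
      refine (Real.continuousOn_log.comp (by fun_prop) ?_)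
      intro y hy
      simp only [Set.mem_compl_iff, Set.mem_singleton_iff]
      have := hy.2
      exact sub_ne_zero.mpr (by linarith : (1:ℝ) ≠ y).symm.symm
    have c3 : ContinuousOn (fun q' : ℝ => 2*(p-q')^2) (Set.Icc p q) := by fun_prop
    rcases eq_or_lt_of_le hp with rfl | hp0
    · have c1 : ContinuousOn (fun q' : ℝ => -((0:ℝ) * Real.log q')) (Set.Icc 0 q) := by
        simp only [zero_mul, neg_zero]
        exact continuousOn_const
      exact (c1.sub c2).sub c3
    · have c1 : ContinuousOn (fun q' : ℝ => -(p * Real.log q')) (Set.Icc p q) := by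
        refine (ContinuousOn.mul continuousOn_const (Real.continuousOn_log.mono ?_)).neg
        intro y hy
        simp only [Set.mem_compl_iff, Set.mem_singleton_iff]
        exact (lt_of_lt_of_le hp0 hy.1).ne'
      exact (c1.sub c2).sub c3
  have hmono : MonotoneOn (F p) (Set.Icc p q) := by
    refine monotoneOn_of_deriv_nonneg (convex_Icc p q) hcont ?_ ?_
    · intro x hx
      rw [interior_Icc] at hx
      have hx0 : 0 < x := lt_of_le_of_lt hp hx.1
      have hx1 : x < 1 := lt_of_lt_of_le hx.2 hq1.le
      exact (hasDerivAt_F p hx0 hx1).differentiableAt.differentiableWithinAt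
    · intro x hx
      rw [interior_Icc] at hx
      have hx0 : 0 < x := lt_of_le_of_lt hp hx.1
      have hx1' : x < 1 := lt_of_lt_of_le hx.2 hq1.le
      rw [(hasDerivAt_F p hx0 hx1').deriv, deriv_F_eq p hx0 hx1']
      apply div_nonneg
      · exact mul_nonneg (by linarith [hx.1]) (sq_nonneg _)
      · have : (0:ℝ) < 1 - x := by linarith
        positivity
  exact hmono (Set.left_mem_Icc.mpr hpq) (Set.right_mem_Icc.mpr hpq) hpq

lemma F_anti {p q : ℝ} (hq : 0 < q) (hpq : q ≤ p) (hp1 : p ≤ 1) : F p p ≤ F p q := by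
  rcases eq_or_lt_of_le hpq with rfl | hlt
  · exact le_rfl
  have hcont : ContinuousOn (F p) (Set.Icc q p) := by
    have c1 : ContinuousOn (fun q' : ℝ => -(p * Real.log q')) (Set.Icc q p) := by
      refine (ContinuousOn.mul continuousOn_const (Real.continuousOn_log.mono ?_)).neg
      intro y hy
      simp only [Set.mem_compl_iff, Set.mem_singleton_iff]
      exact (lt_of_lt_of_le hq hy.1).ne'
    have c3 : ContinuousOn (fun q' : ℝ => 2*(p-q')^2) (Set.Icc q p) := by fun_prop
    rcases eq_or_lt_of_le hp1 with rfl | hp1'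
    · have c2 : ContinuousOn (fun q' : ℝ => ((1:ℝ)-1) * Real.log (1-q')) (Set.Icc q 1) := by
        simp only [sub_self, zero_mul]
        exact continuousOn_const
      exact (c1.sub c2).sub c3
    · have c2 : ContinuousOn (fun q' : ℝ => (1-p) * Real.log (1-q')) (Set.Icc q p) := by
        refine ContinuousOn.mul continuousOn_const ?_
        refine (Real.continuousOn_log.comp (by fun_prop) ?_)
        intro y hy
        simp only [Set.mem_compl_iff, Set.mem_singleton_iff]
        have : y ≤ p := hy.2
        exact sub_ne_zero.mpr (by linarith : (1:ℝ) ≠ y).symm.symm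
      exact (c1.sub c2).sub c3
  have hanti : AntitoneOn (F p) (Set.Icc q p) := by
    refine antitoneOn_of_deriv_nonpos (convex_Icc q p) hcont ?_ ?_
    · intro x hx
      rw [interior_Icc] at hx
      have hx0 : 0 < x := lt_trans hq hx.1
      have hx1 : x < 1 := lt_of_lt_of_le hx.2 hp1
      exact (hasDerivAt_F p hx0 hx1).differentiableAt.differentiableWithinAt
    · intro x hx
      rw [interior_Icc] at hx
      have hx0 : 0 < x := lt_trans hq hx.1
      have hx1' : x < 1 := lt_of_lt_of_le hx.2 hp1
      rw [(hasDerivAt_F p hx0 hx1').deriv, deriv_F_eq p hx0 hx1']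
      apply div_nonpos_of_nonpos_of_nonneg
      · have : x ≤ p := hx.2.le
        nlinarith [sq_nonneg (2*x-1)]
      · have : (0:ℝ) < 1 - x := by linarith
        positivity
  exact hanti (Set.left_mem_Icc.mpr hpq) (Set.right_mem_Icc.mpr hpq) hpq

/-- Bernoulli Pinsker inequality, in the `φ`-divergence form. -/
lemma bernoulli_pinsker {p q : ℝ} (hp0 : 0 ≤ p) (hp1 : p ≤ 1) (hq0 : 0 < q) (hq1 : q < 1) :
    2*(p-q)^2 ≤ q * ((p/q) * Real.log (p/q)) + (1-q) * (((1-p)/(1-q)) * Real.log ((1-p)/(1-q))) := by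
  have h1 : q * ((p/q) * Real.log (p/q)) = p * Real.log p - p * Real.log q := by
    rcases eq_or_lt_of_le hp0 with rfl | hp0'
    · simp
    · rw [Real.log_div hp0'.ne' hq0.ne']
      field_simp
  have h2 : (1-q) * (((1-p)/(1-q)) * Real.log ((1-p)/(1-q)))
      = (1-p) * Real.log (1-p) - (1-p) * Real.log (1-q) := by
    rcases eq_or_lt_of_le hp1 with rfl | hp1'
    · simp
    · have h1p : (1:ℝ) - p ≠ 0 := by intro h; rw [sub_eq_zero] at h; exact absurd h.symm hp1'.ne
      have h1q : (1:ℝ) - q ≠ 0 := by intro h; rw [sub_eq_zero] at h; exact absurd h.symm hq1.ne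
      rw [Real.log_div h1p h1q]
      field_simp
  have key : F p p ≤ F p q := by
    rcases le_total p q with h | h
    · exact F_mono hp0 h hq1
    · exact F_anti hq0 h hp1
  have hFp : F p p = -(p * Real.log p) - (1-p) * Real.log (1-p) := by
    simp [F]
  rw [h1, h2]
  unfold F at key
  rw [show ((p:ℝ)-p)^2 = 0 by ring] at key
  linarith

end PinskerAux

section MeasureLevel

variable {X : Type*} [MeasurableSpace X] (μ ν : Measure X)
  [IsProbabilityMeasure μ] [IsProbabilityMeasure ν]

open PinskerAux

lemma jensen_piece (hac : μ ≪ ν) (hint : Integrable (llr μ ν) μ)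
    {S : Set X} (hS0 : ν S ≠ 0) :
    (ν S).toReal * (((μ S).toReal/(ν S).toReal) * Real.log ((μ S).toReal/(ν S).toReal))
      ≤ ∫ x in S, (μ.rnDeriv ν x).toReal * llr μ ν x ∂ν := by
  haveI : NeZero (ν.restrict S) := ⟨fun h => hS0 (Measure.restrict_eq_zero.mp h)⟩
  have hgint : Integrable (fun x => (μ.rnDeriv ν x).toReal) ν :=
    Measure.integrable_toReal_rnDeriv
  have hφint : Integrable (fun x => (μ.rnDeriv ν x).toReal * llr μ ν x) ν := by
    have := (integrable_rnDeriv_smul_iff hac).mpr hint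
    simpa [smul_eq_mul] using this
  have hJ := Real.convexOn_mul_log.map_average_le (μ := ν.restrict S)
    Real.continuous_mul_log.continuousOn isClosed_Ici
    (ae_of_all _ fun x => ENNReal.toReal_nonneg)
    hgint.restrict
    (by
      show Integrable (fun x => (μ.rnDeriv ν x).toReal * Real.log (μ.rnDeriv ν x).toReal) _
      exact hφint.restrict)
  rw [average_eq, average_eq] at hJ
  simp only [Measure.real, Measure.restrict_apply_univ] at hJ
  rw [Measure.setIntegral_toReal_rnDeriv hac S, Measure.real] at hJ
  have hc : 0 < (ν S).toReal := ENNReal.toReal_pos hS0 (measure_ne_top _ _)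
  have harg : (ν S).toReal⁻¹ • (μ S).toReal = (μ S).toReal/(ν S).toReal := by
    rw [smul_eq_mul]; ring
  rw [harg] at hJ
  have := mul_le_mul_of_nonneg_left hJ hc.le
  calc (ν S).toReal * (((μ S).toReal/(ν S).toReal) * Real.log ((μ S).toReal/(ν S).toReal))
      ≤ (ν S).toReal * ((ν S).toReal⁻¹ •
          ∫ x, (fun t => t * Real.log t) ((μ.rnDeriv ν x).toReal) ∂ν.restrict S) := this
    _ = ∫ x in S, (μ.rnDeriv ν x).toReal * llr μ ν x ∂ν := by
        rw [smul_eq_mul, ← mul_assoc, mul_inv_cancel₀ hc.ne', one_mul]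
        rfl

lemma K_eq (hac : μ ≪ ν) (hint : Integrable (llr μ ν) μ) :
    ∫ x, (μ.rnDeriv ν x).toReal * llr μ ν x ∂ν = ∫ x, llr μ ν x ∂μ := by
  have := integral_rnDeriv_smul (f := llr μ ν) hac
  simpa [smul_eq_mul] using this

lemma K_nonneg (hac : μ ≪ ν) (hint : Integrable (llr μ ν) μ) :
    0 ≤ ∫ x, llr μ ν x ∂μ := by
  have h := jensen_piece μ ν hac hint (S := Set.univ) (by simp)
  rw [Measure.restrict_univ, K_eq μ ν hac hint] at h
  simpa using h

lemma pinsker_real (hac : μ ≪ ν) (hint : Integrable (llr μ ν) μ)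
    {A : Set X} (hA : MeasurableSet A) :
    2 * ((μ A).toReal - (ν A).toReal)^2 ≤ ∫ x, llr μ ν x ∂μ := by
  have hK0 := K_nonneg μ ν hac hint
  by_cases hν0 : ν A = 0
  · have hμ0 : μ A = 0 := hac hν0
    rw [hμ0, hν0]; simpa using hK0
  by_cases hνc : ν Aᶜ = 0
  · have hμc : μ Aᶜ = 0 := hac hνc
    have h1 : μ A = 1 := by
      have := prob_add_prob_compl (μ := μ) hA; rw [hμc, add_zero] at this; exact this
    have h2 : ν A = 1 := by
      have := prob_add_prob_compl (μ := ν) hA; rw [hνc, add_zero] at this; exact this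
    rw [h1, h2]; simpa using hK0
  · set p := (μ A).toReal with hp
    set q := (ν A).toReal with hq
    have hνA1 : ν A + ν Aᶜ = 1 := prob_add_prob_compl hA
    have hμA1 : μ A + μ Aᶜ = 1 := prob_add_prob_compl hA
    have hνr : q + (ν Aᶜ).toReal = 1 := by
      rw [hq, ← ENNReal.toReal_add (measure_ne_top _ _) (measure_ne_top _ _), hνA1]; simp
    have hμr : p + (μ Aᶜ).toReal = 1 := by
      rw [hp, ← ENNReal.toReal_add (measure_ne_top _ _) (measure_ne_top _ _), hμA1]; simp
    have hq0 : 0 < q := ENNReal.toReal_pos hν0 (measure_ne_top _ _)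
    have hqc0 : 0 < (ν Aᶜ).toReal := ENNReal.toReal_pos hνc (measure_ne_top _ _)
    have hq1 : q < 1 := by linarith
    have hp0 : 0 ≤ p := ENNReal.toReal_nonneg
    have hp1 : p ≤ 1 := by linarith [ENNReal.toReal_nonneg (a := μ Aᶜ)]
    have hφint : Integrable (fun x => (μ.rnDeriv ν x).toReal * llr μ ν x) ν := by
      have := (integrable_rnDeriv_smul_iff hac).mpr hint
      simpa [smul_eq_mul] using this
    have hsplit : (∫ x in A, (μ.rnDeriv ν x).toReal * llr μ ν x ∂ν)
        + ∫ x in Aᶜ, (μ.rnDeriv ν x).toReal * llr μ ν x ∂ν = ∫ x, llr μ ν x ∂μ := by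
      rw [integral_add_compl hA hφint, K_eq μ ν hac hint]
    have hJ1 := jensen_piece μ ν hac hint hν0
    have hJ2 := jensen_piece μ ν hac hint hνc
    have hμc' : (μ Aᶜ).toReal = 1 - p := by linarith
    have hνc' : (ν Aᶜ).toReal = 1 - q := by linarith
    rw [hμc', hνc'] at hJ2
    have hbern := bernoulli_pinsker hp0 hp1 hq0 hq1
    linarith

end MeasureLevel

section BH

variable {X : Type*} [MeasurableSpace X] (μ ν : Measure X)
  [IsProbabilityMeasure μ] [IsProbabilityMeasure ν]

lemma am_gm_sqrt {m M s : ℝ} (hm : 0 ≤ m) (hM : 0 ≤ M) (hs : 0 < s) :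
    Real.sqrt (m*M) ≤ (m/s + s*M)/2 := by
  have h : m*M ≤ ((m/s + s*M)/2)^2 := by
    have expand : ((m/s + s*M)/2)^2 = (m + s^2*M)^2/(4*s^2) := by
      field_simp; ring
    rw [expand, le_div_iff₀ (by positivity)]
    nlinarith [sq_nonneg (m - s^2*M)]
  calc Real.sqrt (m*M) ≤ Real.sqrt (((m/s + s*M)/2)^2) := Real.sqrt_le_sqrt h
    _ = (m/s + s*M)/2 := Real.sqrt_sq (by positivity)

lemma sqrt_le_one_add {t : ℝ} (ht : 0 ≤ t) : Real.sqrt t ≤ 1 + t := by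
  calc Real.sqrt t ≤ Real.sqrt ((1+t)^2) := Real.sqrt_le_sqrt (by nlinarith)
    _ = 1 + t := Real.sqrt_sq (by linarith)

lemma bh_real (hac : μ ≪ ν) (hint : Integrable (llr μ ν) μ)
    {A : Set X} (hA : MeasurableSet A) :
    ((μ A).toReal - (ν A).toReal)^2 ≤ 1 - Real.exp (-∫ x, llr μ ν x ∂μ) := by
  set K := ∫ x, llr μ ν x ∂μ with hK
  set g := fun x => (μ.rnDeriv ν x).toReal with hg
  have hgmeas : Measurable g := (Measure.measurable_rnDeriv μ ν).ennreal_toReal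
  have hgnn : ∀ x, 0 ≤ g x := fun x => ENNReal.toReal_nonneg
  have hgint : Integrable g ν := Measure.integrable_toReal_rnDeriv
  have hg1 : ∫ x, g x ∂ν = 1 := by
    rw [hg, Measure.integral_toReal_rnDeriv hac]; simp
  have hmin_int : Integrable (fun x => min (g x) 1) ν := by
    refine Integrable.mono' (integrable_const (1:ℝ))
      ((hgmeas.min measurable_const).aestronglyMeasurable) (ae_of_all _ fun x => ?_)
    rw [Real.norm_eq_abs, abs_of_nonneg (le_min (hgnn x) zero_le_one)]
    exact min_le_right _ _
  have hmax_int : Integrable (fun x => max (g x) 1) ν := by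
    refine Integrable.mono' (hgint.add (integrable_const (1:ℝ)))
      ((hgmeas.max measurable_const).aestronglyMeasurable) (ae_of_all _ fun x => ?_)
    rw [Real.norm_eq_abs, abs_of_nonneg (le_max_of_le_right zero_le_one)]
    simp only [Pi.add_apply]
    exact max_le (by linarith [hgnn x]) (by linarith [hgnn x])
  have hsqrt_int : Integrable (fun x => Real.sqrt (g x)) ν := by
    refine Integrable.mono' ((integrable_const (1:ℝ)).add hgint)
      (hgmeas.sqrt.aestronglyMeasurable) (ae_of_all _ fun x => ?_)
    rw [Real.norm_eq_abs, abs_of_nonneg (Real.sqrt_nonneg _)]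
    simp only [Pi.add_apply]
    exact sqrt_le_one_add (hgnn x)
  set a := ∫ x, min (g x) 1 ∂ν with ha
  set b := ∫ x, max (g x) 1 ∂ν with hb
  have hab : a + b = 2 := by
    rw [ha, hb, ← integral_add hmin_int hmax_int]
    have : ∀ x, min (g x) 1 + max (g x) 1 = g x + 1 := fun x => min_add_max _ _
    rw [integral_congr_ae (ae_of_all _ this), integral_add hgint (integrable_const 1), hg1]
    norm_num
  -- |d| ≤ 1 - a
  have hμA : (μ A).toReal = ∫ x in A, g x ∂ν := (Measure.setIntegral_toReal_rnDeriv hac A).symm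
  have hνA : (ν A).toReal = ∫ x in A, (1:ℝ) ∂ν := by simp; rfl
  have hone_min_int : Integrable (fun x => g x - min (g x) 1) ν := hgint.sub hmin_int
  have h1min_int : Integrable (fun x => 1 - min (g x) 1) ν := (integrable_const 1).sub hmin_int
  have hIa1 : ∫ x, (g x - min (g x) 1) ∂ν = 1 - a := by
    rw [integral_sub hgint hmin_int, hg1]
  have hIa2 : ∫ x, ((1:ℝ) - min (g x) 1) ∂ν = 1 - a := by
    rw [integral_sub (integrable_const 1) hmin_int]; simp; rfl
  have hd_le : (μ A).toReal - (ν A).toReal ≤ 1 - a := by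
    rw [hμA, hνA, ← integral_sub hgint.restrict (integrable_const 1).restrict]
    calc ∫ x in A, (g x - 1) ∂ν
        ≤ ∫ x in A, (g x - min (g x) 1) ∂ν := by
          refine integral_mono (hgint.restrict.sub (integrable_const 1).restrict)
            hone_min_int.restrict (fun x => ?_)
          simp only
          linarith [min_le_right (g x) (1:ℝ)]
      _ ≤ ∫ x, (g x - min (g x) 1) ∂ν :=
          setIntegral_le_integral hone_min_int
            (ae_of_all _ fun x => sub_nonneg.mpr (min_le_left _ _))
      _ = 1 - a := hIa1
  have hd_ge : (ν A).toReal - (μ A).toReal ≤ 1 - a := by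
    rw [hμA, hνA, ← integral_sub (integrable_const 1).restrict hgint.restrict]
    calc ∫ x in A, ((1:ℝ) - g x) ∂ν
        ≤ ∫ x in A, ((1:ℝ) - min (g x) 1) ∂ν := by
          refine integral_mono ((integrable_const 1).restrict.sub hgint.restrict)
            h1min_int.restrict (fun x => ?_)
          simp only
          linarith [min_le_left (g x) (1:ℝ)]
      _ ≤ ∫ x, ((1:ℝ) - min (g x) 1) ∂ν :=
          setIntegral_le_integral h1min_int
            (ae_of_all _ fun x => sub_nonneg.mpr (min_le_right _ _))
      _ = 1 - a := hIa2
  have hd2 : ((μ A).toReal - (ν A).toReal)^2 ≤ (1-a)^2 :=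
    sq_le_sq' (by linarith) hd_le
  -- positivity of a and b
  have ha_nn : 0 ≤ a := integral_nonneg fun x => le_min (hgnn x) zero_le_one
  have hb1 : 1 ≤ b := by
    calc (1:ℝ) = ∫ _, (1:ℝ) ∂ν := by simp
      _ ≤ b := integral_mono (integrable_const 1) hmax_int fun x => le_max_right _ _
  have ha0 : 0 < a := by
    rcases lt_or_eq_of_le ha_nn with h | h
    · exact h
    have hae : (fun x => min (g x) 1) =ᵐ[ν] 0 := by
      rw [← integral_eq_zero_iff_of_nonneg (fun x => le_min (hgnn x) zero_le_one) hmin_int]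
      exact h.symm
    have hgae : g =ᵐ[ν] 0 := by
      filter_upwards [hae] with x hx
      simp only [Pi.zero_apply] at hx ⊢
      rcases le_total (g x) 1 with hle | hle
      · rwa [min_eq_left hle] at hx
      · rw [min_eq_right hle] at hx; norm_num at hx
    have : (1:ℝ) = 0 := by
      rw [← hg1, integral_congr_ae hgae]; simp
    norm_num at this
  have hb0 : 0 < b := lt_of_lt_of_le one_pos hb1
  -- Cauchy–Schwarz via AM–GM: S ≤ sqrt a * sqrt b
  set S := ∫ x, Real.sqrt (g x) ∂ν with hS
  have hS_nn : 0 ≤ S := integral_nonneg fun x => Real.sqrt_nonneg _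
  have hsa : 0 < Real.sqrt a := Real.sqrt_pos.mpr ha0
  have hsb : 0 < Real.sqrt b := Real.sqrt_pos.mpr hb0
  set s := Real.sqrt a / Real.sqrt b with hs_def
  have hs0 : 0 < s := div_pos hsa hsb
  have hS_le : S ≤ Real.sqrt a * Real.sqrt b := by
    have hpt : ∀ x, Real.sqrt (g x) ≤ (min (g x) 1 / s + s * max (g x) 1)/2 := by
      intro x
      have := am_gm_sqrt (m := min (g x) 1) (M := max (g x) 1)
        (le_min (hgnn x) zero_le_one) (le_max_of_le_right zero_le_one) hs0
      rwa [min_mul_max, mul_one] at this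
    have hrhs_int : Integrable (fun x => (min (g x) 1 / s + s * max (g x) 1)/2) ν :=
      ((hmin_int.div_const s).add (hmax_int.const_mul s)).div_const 2
    calc S ≤ ∫ x, (min (g x) 1 / s + s * max (g x) 1)/2 ∂ν :=
          integral_mono hsqrt_int hrhs_int hpt
      _ = (a/s + s*b)/2 := by
          rw [integral_div, integral_add (hmin_int.div_const s) (hmax_int.const_mul s),
            integral_div, integral_const_mul]
      _ = Real.sqrt a * Real.sqrt b := by
          have haa : a = Real.sqrt a * Real.sqrt a := (Real.mul_self_sqrt ha0.le).symm
          have hbb : b = Real.sqrt b * Real.sqrt b := (Real.mul_self_sqrt hb0.le).symm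
          rw [hs_def]
          rw [haa, hbb]
          field_simp
          simp only [Real.sqrt_sq hsa.le, Real.sqrt_sq hsb.le]
          nlinarith [Real.mul_self_sqrt ha0.le, Real.mul_self_sqrt hb0.le, hsa, hsb]
  have hS2 : S^2 ≤ a*b := by
    calc S^2 ≤ (Real.sqrt a * Real.sqrt b)^2 := by
          exact pow_le_pow_left₀ hS_nn hS_le 2
      _ = a*b := by
          rw [mul_pow, Real.sq_sqrt ha0.le, Real.sq_sqrt hb0.le]
  -- Jensen: exp(-K/2) ≤ S
  have hh_int : Integrable (fun x => (ν.rnDeriv μ x).toReal) μ :=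
    Measure.integrable_toReal_rnDeriv
  have hhmeas : Measurable (fun x => (ν.rnDeriv μ x).toReal) :=
    (Measure.measurable_rnDeriv ν μ).ennreal_toReal
  have hsqh_int : Integrable (fun x => Real.sqrt ((ν.rnDeriv μ x).toReal)) μ := by
    refine Integrable.mono' ((integrable_const (1:ℝ)).add hh_int)
      (hhmeas.sqrt.aestronglyMeasurable) (ae_of_all _ fun x => ?_)
    rw [Real.norm_eq_abs, abs_of_nonneg (Real.sqrt_nonneg _)]
    simp only [Pi.add_apply]
    exact sqrt_le_one_add ENNReal.toReal_nonneg
  have heq : (fun x => Real.exp (-llr μ ν x / 2)) =ᵐ[μ]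
      fun x => Real.sqrt ((ν.rnDeriv μ x).toReal) := by
    filter_upwards [exp_neg_llr hac] with x hx
    rw [Real.exp_half, hx]
  have hexp_int : Integrable (fun x => Real.exp (-llr μ ν x / 2)) μ :=
    hsqh_int.congr heq.symm
  have hJen : Real.exp (-K/2) ≤ S := by
    have hconv := convexOn_exp.map_average_le (μ := μ) Real.continuous_exp.continuousOn
      isClosed_univ (ae_of_all _ fun x => Set.mem_univ _)
      (by show Integrable (fun x => -llr μ ν x / 2) μ
          exact (hint.neg).div_const 2)
      (by
        show Integrable (fun x => Real.exp (-llr μ ν x / 2)) μ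
        exact hexp_int)
    rw [average_eq_integral, average_eq_integral] at hconv
    have harg : ∫ x, -llr μ ν x / 2 ∂μ = -K/2 := by
      rw [integral_div, integral_neg, hK]
    rw [harg] at hconv
    have hstep1 : ∫ x, Real.exp (-llr μ ν x / 2) ∂μ
        = ∫ x, Real.sqrt ((ν.rnDeriv μ x).toReal) ∂μ := integral_congr_ae heq
    have hstep2 : ∫ x, Real.sqrt ((ν.rnDeriv μ x).toReal) ∂μ ≤ S := by
      have hchg : ∫ x, Real.sqrt ((ν.rnDeriv μ x).toReal) ∂μ
          = ∫ x, (μ.rnDeriv ν x).toReal * Real.sqrt ((ν.rnDeriv μ x).toReal) ∂ν := by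
        have := integral_rnDeriv_smul (f := fun x => Real.sqrt ((ν.rnDeriv μ x).toReal)) hac
        simp only [smul_eq_mul] at this
        exact this.symm
      rw [hchg]
      refine integral_mono_ae ?_ hsqrt_int ?_
      · have := (integrable_rnDeriv_smul_iff hac).mpr hsqh_int
        simpa [smul_eq_mul] using this
      · -- a.e. pointwise bound
        have hinv : ∀ᵐ x ∂μ, (μ.rnDeriv ν x)⁻¹ = ν.rnDeriv μ x := Measure.inv_rnDeriv hac
        have hinv' : ∀ᵐ x ∂ν, μ.rnDeriv ν x ≠ 0 → (μ.rnDeriv ν x)⁻¹ = ν.rnDeriv μ x := by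
          rw [← ae_withDensity_iff (Measure.measurable_rnDeriv μ ν)]
          rw [Measure.withDensity_rnDeriv_eq μ ν hac]
          exact hinv
        filter_upwards [hinv', Measure.rnDeriv_lt_top μ ν] with x hx hxlt
        by_cases hx0 : μ.rnDeriv ν x = 0
        · simp only [hg, hx0, ENNReal.toReal_zero, zero_mul]
          exact Real.sqrt_nonneg _
        · have hxinv := hx hx0
          have hgpos : 0 < g x := ENNReal.toReal_pos hx0 hxlt.ne
          have hhval : (ν.rnDeriv μ x).toReal = (g x)⁻¹ := by
            rw [← hxinv, ENNReal.toReal_inv]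
          rw [hhval, Real.sqrt_inv]
          refine le_of_eq ?_
          have hgx : g x = Real.sqrt (g x) * Real.sqrt (g x) :=
            (Real.mul_self_sqrt hgpos.le).symm
          have hsgx : Real.sqrt (g x) ≠ 0 := (Real.sqrt_pos.mpr hgpos).ne'
          calc (μ.rnDeriv ν x).toReal * (Real.sqrt (g x))⁻¹
              = (Real.sqrt (g x) * Real.sqrt (g x)) * (Real.sqrt (g x))⁻¹ := by
                rw [← hgx]
            _ = Real.sqrt (g x) := by field_simp
    calc Real.exp (-K/2) ≤ ∫ x, Real.exp (-llr μ ν x / 2) ∂μ := hconv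
      _ = ∫ x, Real.sqrt ((ν.rnDeriv μ x).toReal) ∂μ := hstep1
      _ ≤ S := hstep2
  have hexpK : Real.exp (-K) ≤ a * b := by
    have h1 : Real.exp (-K) = (Real.exp (-K/2))^2 := by
      rw [sq, ← Real.exp_add]; congr 1; ring
    rw [h1]
    calc (Real.exp (-K/2))^2 ≤ S^2 := pow_le_pow_left₀ (Real.exp_pos _).le hJen 2
      _ ≤ a*b := hS2
  nlinarith [hexpK, hd2, hab]

end BH


/-- Combined Pinsker and Bretagnolle–Huber inequalities. -/
theorem pinsker_BH {X : Type*} [MeasurableSpace X] (μ ν : Measure X)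
    [IsProbabilityMeasure μ] [IsProbabilityMeasure ν] :
    tvDist μ ν ≤ (min (klDiv μ ν / 2) (1 - expNeg (klDiv μ ν))) ^ (1/2 : ℝ) := by
  by_cases hcond : μ ≪ ν ∧ Integrable (fun x => Real.log ((μ.rnDeriv ν x).toReal)) μ
  · have hkl : klDiv μ ν
        = ENNReal.ofReal (∫ x, Real.log ((μ.rnDeriv ν x).toReal) ∂μ) := by
      rw [klDiv, if_pos hcond]
    obtain ⟨hac, hint'⟩ := hcond
    have hint : Integrable (llr μ ν) μ := hint'
    have hKdef : ∫ x, Real.log ((μ.rnDeriv ν x).toReal) ∂μ = ∫ x, llr μ ν x ∂μ := rfl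
    rw [hKdef] at hkl
    set K := ∫ x, llr μ ν x ∂μ with hK
    have hK0 : 0 ≤ K := K_nonneg μ ν hac hint
    have hE1 : Real.exp (-K) ≤ 1 := by
      calc Real.exp (-K) ≤ Real.exp 0 := Real.exp_le_exp.mpr (by linarith)
        _ = 1 := Real.exp_zero
    set m := min (K/2) (1 - Real.exp (-K)) with hm
    have hm0 : 0 ≤ m := le_min (by linarith) (by linarith)
    have h2 : ENNReal.ofReal K / 2 = ENNReal.ofReal (K/2) := by
      rw [ENNReal.ofReal_div_of_pos (by norm_num), ENNReal.ofReal_ofNat]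
    have hexp : expNeg (klDiv μ ν) = ENNReal.ofReal (Real.exp (-K)) := by
      rw [expNeg, hkl, if_neg ENNReal.ofReal_ne_top, ENNReal.toReal_ofReal hK0]
    have hsub : 1 - ENNReal.ofReal (Real.exp (-K)) = ENNReal.ofReal (1 - Real.exp (-K)) := by
      rw [ENNReal.ofReal_sub 1 (Real.exp_pos _).le, ENNReal.ofReal_one]
    have hmin : min (ENNReal.ofReal (K/2)) (ENNReal.ofReal (1 - Real.exp (-K)))
        = ENNReal.ofReal m := by
      rcases le_total (K/2) (1 - Real.exp (-K)) with h | h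
      · rw [min_eq_left (ENNReal.ofReal_le_ofReal h), hm, min_eq_left h]
      · rw [min_eq_right (ENNReal.ofReal_le_ofReal h), hm, min_eq_right h]
    rw [hexp, hkl, h2, hsub, hmin,
      ENNReal.ofReal_rpow_of_nonneg hm0 (by norm_num), ← Real.sqrt_eq_rpow]
    rw [tvDist]
    refine iSup_le fun A => iSup_le fun hA => ?_
    have heq : μ A - ν A = ENNReal.ofReal ((μ A).toReal - (ν A).toReal) := by
      conv_lhs => rw [← ENNReal.ofReal_toReal (measure_ne_top μ A),
        ← ENNReal.ofReal_toReal (measure_ne_top ν A)]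
      rw [← ENNReal.ofReal_sub _ ENNReal.toReal_nonneg]
    rw [heq]
    apply ENNReal.ofReal_le_ofReal
    rcases le_or_gt ((μ A).toReal - (ν A).toReal) 0 with hd | hd
    · exact le_trans hd (Real.sqrt_nonneg _)
    · refine (Real.le_sqrt hd.le hm0).mpr (le_min ?_ ?_)
      · linarith [pinsker_real μ ν hac hint hA]
      · exact bh_real μ ν hac hint hA
  · have hkl : klDiv μ ν = ⊤ := by rw [klDiv, if_neg hcond]
    have hexp : expNeg (klDiv μ ν) = 0 := by rw [expNeg, hkl, if_pos rfl]
    rw [hexp, hkl, tsub_zero,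
      ENNReal.top_div_of_ne_top (by norm_num : (2:ℝ≥0∞) ≠ ⊤),
      min_eq_right le_top, ENNReal.one_rpow, tvDist]
    exact iSup_le fun A => iSup_le fun hA => le_trans tsub_le_self prob_le_one
end

section
/- Let f be a measurable function and μ, ν probability measures. Then the KL divergence satisfies D_KL(f_#μ ‖ f_#ν) ≤ D_KL(μ ‖ ν). -/
open MeasureTheory ENNReal
open scoped Classical

private lemma aux_mul_ofReal_max_le (r : ℝ≥0∞) (hr : r ≠ ⊤) :
    r * ENNReal.ofReal (max (-Real.log r.toReal) 0) ≤ 1 := by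
  rcases eq_or_ne r 0 with h0 | h0
  · simp [h0]
  · have ht : 0 < r.toReal := ENNReal.toReal_pos h0 hr
    have h1 : max (-Real.log r.toReal) 0 ≤ r.toReal⁻¹ := by
      refine max_le ?_ (by positivity)
      have h2 := Real.log_le_sub_one_of_pos (inv_pos.mpr ht)
      rw [Real.log_inv] at h2
      linarith
    calc r * ENNReal.ofReal (max (-Real.log r.toReal) 0)
        ≤ r * ENNReal.ofReal r.toReal⁻¹ := by gcongr
      _ = ENNReal.ofReal (r.toReal * r.toReal⁻¹) := by
          rw [ENNReal.ofReal_mul ht.le, ENNReal.ofReal_toReal hr]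
      _ = 1 := by rw [mul_inv_cancel₀ ht.ne', ENNReal.ofReal_one]

private lemma integrable_negPart_llr {X : Type*} [MeasurableSpace X] (μ ν : Measure X)
    [IsProbabilityMeasure μ] [IsProbabilityMeasure ν] (hμν : μ ≪ ν) :
    Integrable (fun x ↦ max (-llr μ ν x) 0) μ := by
  refine ⟨((measurable_llr μ ν).neg.max measurable_const).aestronglyMeasurable,
    (hasFiniteIntegral_iff_ofReal (Filter.Eventually.of_forall fun x ↦ le_max_right _ _)).mpr ?_⟩
  show ∫⁻ x, ENNReal.ofReal (max (-llr μ ν x) 0) ∂μ < ⊤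
  have hmeas : AEMeasurable (fun x ↦ ENNReal.ofReal (max (-llr μ ν x) 0)) ν :=
    (((measurable_llr μ ν).neg.max measurable_const).ennreal_ofReal).aemeasurable
  rw [← lintegral_rnDeriv_mul hμν hmeas]
  calc ∫⁻ x, μ.rnDeriv ν x * ENNReal.ofReal (max (-llr μ ν x) 0) ∂ν
      ≤ ∫⁻ _, 1 ∂ν := by
        refine lintegral_mono_ae ?_
        filter_upwards [Measure.rnDeriv_lt_top μ ν] with x hx
        exact aux_mul_ofReal_max_le _ hx.ne
    _ = 1 := by simp
    _ < ⊤ := one_lt_top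

private lemma integral_llr_nonneg' {X : Type*} [MeasurableSpace X] {μ ν : Measure X}
    [IsProbabilityMeasure μ] [IsProbabilityMeasure ν] (hμν : μ ≪ ν)
    (h : Integrable (llr μ ν) μ) : 0 ≤ ∫ x, llr μ ν x ∂μ := by
  have hint : Integrable (fun x ↦ Real.exp (-llr μ ν x)) μ :=
    (Measure.integrable_toReal_rnDeriv).congr (exp_neg_llr hμν).symm
  have h1 : ∫ x, -llr μ ν x ∂μ ≤ ∫ x, (Real.exp (-llr μ ν x) - 1) ∂μ := by
    refine integral_mono h.neg (hint.sub (integrable_const 1)) fun x ↦ ?_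
    have h2 := Real.add_one_le_exp (-llr μ ν x)
    simp only
    linarith
  have h2 : ∫ x, Real.exp (-llr μ ν x) ∂μ ≤ 1 := by
    rw [integral_congr_ae (exp_neg_llr hμν)]
    have h3 := Measure.setIntegral_toReal_rnDeriv_le (ν := μ) (μ := ν)
      (s := Set.univ) (measure_ne_top ν _)
    rw [setIntegral_univ] at h3
    simpa using h3
  rw [integral_neg] at h1
  rw [integral_sub hint (integrable_const 1), integral_const] at h1
  simp only [measure_univ, ENNReal.toReal_one, smul_eq_mul, one_mul, probReal_univ, mul_one] at h1
  linarith

open Real in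
/-- Data processing inequality for KL divergence. -/
theorem klDiv_data_processing {X Y : Type*} [MeasurableSpace X] [MeasurableSpace Y]
    (f : X → Y) (hf : Measurable f) (μ ν : Measure X)
    [IsProbabilityMeasure μ] [IsProbabilityMeasure ν] :
    klDiv (μ.map f) (ν.map f) ≤ klDiv μ ν := by
  by_cases hc : μ ≪ ν ∧ Integrable (fun x => Real.log ((μ.rnDeriv ν x).toReal)) μ
  · obtain ⟨hμν, hint⟩ := hc
    have hint : Integrable (llr μ ν) μ := hint
    have hμνf : μ.map f ≪ ν.map f := hμν.map hf
    have hPμf : IsProbabilityMeasure (μ.map f) := Measure.isProbabilityMeasure_map hf.aemeasurable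
    have hPνf : IsProbabilityMeasure (ν.map f) := Measure.isProbabilityMeasure_map hf.aemeasurable
    set g : Y → ℝ≥0∞ := (μ.map f).rnDeriv (ν.map f) with hgdef
    have hgm : Measurable g := Measure.measurable_rnDeriv _ _
    have hgfm : Measurable (fun x ↦ g (f x)) := hgm.comp hf
    have hwd : (ν.map f).withDensity g = μ.map f := Measure.withDensity_rnDeriv_eq _ _ hμνf
    set ν' : Measure X := ν.withDensity (fun x ↦ g (f x)) with hν'def
    -- ν' is a probability measure
    have hν'univ : ν' Set.univ = 1 := by
      calc ν' Set.univ = ∫⁻ x, g (f x) ∂ν := by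
            rw [hν'def, withDensity_apply _ MeasurableSet.univ, setLIntegral_univ]
        _ = ∫⁻ y, g y ∂(ν.map f) := (lintegral_map hgm hf).symm
        _ = ((ν.map f).withDensity g) Set.univ := by
            rw [withDensity_apply _ MeasurableSet.univ, setLIntegral_univ]
        _ = (μ.map f) Set.univ := by rw [hwd]
        _ = 1 := measure_univ
    have hPν' : IsProbabilityMeasure ν' := ⟨hν'univ⟩
    -- the set where g ∘ f vanishes is μ-null
    have hS : μ (f ⁻¹' (g ⁻¹' {0})) = 0 := by
      rw [← Measure.map_apply hf (hgm (measurableSet_singleton 0)), ← hwd,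
        withDensity_apply _ (hgm (measurableSet_singleton 0))]
      calc ∫⁻ y in g ⁻¹' {0}, g y ∂(ν.map f)
          = ∫⁻ _ in g ⁻¹' {0}, 0 ∂(ν.map f) :=
            setLIntegral_congr_fun (hgm (measurableSet_singleton 0))
              (fun y hy ↦ hy)
        _ = 0 := by simp
    -- μ ≪ ν'
    have hμν' : μ ≪ ν' := by
      refine Measure.AbsolutelyContinuous.mk fun A hA hA0 ↦ ?_
      rw [hν'def, withDensity_apply _ hA] at hA0
      have hae : ∀ᵐ x ∂ν, x ∈ A → g (f x) = 0 :=
        (setLIntegral_eq_zero_iff hA hgfm).mp hA0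
      have h1 : ν (A ∩ (f ⁻¹' (g ⁻¹' {0}))ᶜ) = 0 := by
        refine measure_mono_null ?_ (ae_iff.mp hae)
        rintro x ⟨hxA, hxS⟩
        exact fun h ↦ hxS (h hxA)
      have h2 : μ (A ∩ (f ⁻¹' (g ⁻¹' {0}))ᶜ) = 0 := hμν h1
      have h3 : μ (A ∩ f ⁻¹' (g ⁻¹' {0})) = 0 :=
        measure_mono_null Set.inter_subset_right hS
      refine le_antisymm ?_ (zero_le)
      calc μ A = μ ((A ∩ f ⁻¹' (g ⁻¹' {0})) ∪ (A ∩ (f ⁻¹' (g ⁻¹' {0}))ᶜ)) := by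
            rw [Set.inter_union_compl]
        _ ≤ μ (A ∩ f ⁻¹' (g ⁻¹' {0})) + μ (A ∩ (f ⁻¹' (g ⁻¹' {0}))ᶜ) := measure_union_le _ _
        _ = 0 := by rw [h2, h3, add_zero]
    -- the chain rule a.e. μ
    have hchain : ∀ᵐ x ∂μ, μ.rnDeriv ν' x * ν'.rnDeriv ν x = μ.rnDeriv ν x :=
      hμν.ae_le (Measure.rnDeriv_mul_rnDeriv hμν')
    have hν'ν : ∀ᵐ x ∂μ, ν'.rnDeriv ν x = g (f x) :=
      hμν.ae_le (Measure.rnDeriv_withDensity ν hgfm)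
    set B : X → ℝ := fun x ↦ Real.log (g (f x)).toReal with hBdef
    -- key a.e. decomposition: llr μ ν = llr μ ν' + B
    have hkey : ∀ᵐ x ∂μ, llr μ ν x = llr μ ν' x + B x := by
      filter_upwards [hchain, hν'ν, Measure.rnDeriv_pos hμν,
        hμν.ae_le (Measure.rnDeriv_lt_top μ ν), Measure.rnDeriv_pos hμν',
        hμν'.ae_le (Measure.rnDeriv_lt_top μ ν')] with x h1 h2 h3 h4 h5 h6
      rw [h2] at h1
      have hgf0 : g (f x) ≠ 0 := by
        intro h0
        rw [h0, mul_zero] at h1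
        exact absurd h1.symm h3.ne'
      have hgft : g (f x) ≠ ⊤ := by
        intro h0
        rw [h0, ENNReal.mul_top h5.ne'] at h1
        exact absurd h1.symm h4.ne
      have ht1 : (μ.rnDeriv ν' x).toReal ≠ 0 := (ENNReal.toReal_pos h5.ne' h6.ne).ne'
      have ht2 : (g (f x)).toReal ≠ 0 := (ENNReal.toReal_pos hgf0 hgft).ne'
      rw [llr, llr, hBdef, ← h1, ENNReal.toReal_mul, Real.log_mul ht1 ht2]
    -- integrability of the negative parts
    have hAneg : Integrable (fun x ↦ max (-llr μ ν' x) 0) μ :=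
      integrable_negPart_llr μ ν' hμν'
    have hBneg : Integrable (fun x ↦ max (-B x) 0) μ := by
      have h1 : Integrable (fun y ↦ max (-llr (μ.map f) (ν.map f) y) 0) (μ.map f) :=
        integrable_negPart_llr _ _ hμνf
      have h2 := (integrable_map_measure
        ((((measurable_llr (μ.map f) (ν.map f)).neg.max
          measurable_const)).aestronglyMeasurable) hf.aemeasurable).mp h1
      exact h2
    -- integrability of each part
    have habs : Integrable (fun x ↦ |llr μ ν x|) μ := hint.abs
    have hApos : Integrable (fun x ↦ max (llr μ ν' x) 0) μ := by
      refine Integrable.mono' (habs.add hBneg)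
        (((measurable_llr μ ν').max measurable_const).aestronglyMeasurable) ?_
      filter_upwards [hkey] with x hx
      rw [Real.norm_eq_abs, abs_of_nonneg (le_max_right _ _)]
      have h1 : llr μ ν' x ≤ |llr μ ν x| + max (-B x) 0 := by
        have := le_abs_self (llr μ ν x)
        have := le_max_left (-B x) 0
        linarith
      have h2 : (0 : ℝ) ≤ |llr μ ν x| + max (-B x) 0 := by positivity
      exact max_le h1 h2
    have hBpos : Integrable (fun x ↦ max (B x) 0) μ := by
      refine Integrable.mono' (habs.add hAneg)
        ((hgfm.ennreal_toReal.log.max measurable_const).aestronglyMeasurable) ?_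
      filter_upwards [hkey] with x hx
      rw [Real.norm_eq_abs, abs_of_nonneg (le_max_right _ _)]
      have h1 : B x ≤ |llr μ ν x| + max (-llr μ ν' x) 0 := by
        have := le_abs_self (llr μ ν x)
        have := le_max_left (-llr μ ν' x) 0
        linarith
      have h2 : (0 : ℝ) ≤ |llr μ ν x| + max (-llr μ ν' x) 0 := by positivity
      exact max_le h1 h2
    have hsplit : ∀ (u : X → ℝ) (x : X), max (u x) 0 - max (-u x) 0 = u x := by
      intro u x
      rcases le_total 0 (u x) with h | h
      · rw [max_eq_left h, max_eq_right (neg_nonpos.mpr h), sub_zero]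
      · rw [max_eq_right h, max_eq_left (neg_nonneg.mpr h), zero_sub, neg_neg]
    have hAint : Integrable (llr μ ν') μ :=
      (hApos.sub hAneg).congr (Filter.Eventually.of_forall fun x ↦ hsplit (llr μ ν') x)
    have hBint : Integrable B μ :=
      (hBpos.sub hBneg).congr (Filter.Eventually.of_forall fun x ↦ hsplit B x)
    -- nonnegativity of the "conditional" KL term
    have hA0 : 0 ≤ ∫ x, llr μ ν' x ∂μ := integral_llr_nonneg' hμν' hAint
    have hsum : ∫ x, llr μ ν x ∂μ = ∫ x, llr μ ν' x ∂μ + ∫ x, B x ∂μ := by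
      rw [← integral_add hAint hBint]
      exact integral_congr_ae hkey
    -- transfer to the mapped measures
    have hBmap_int : Integrable (llr (μ.map f) (ν.map f)) (μ.map f) := by
      refine (integrable_map_measure
        (stronglyMeasurable_llr _ _).aestronglyMeasurable hf.aemeasurable).mpr ?_
      exact hBint
    have hBmap : ∫ y, llr (μ.map f) (ν.map f) y ∂(μ.map f) = ∫ x, B x ∂μ :=
      integral_map hf.aemeasurable (stronglyMeasurable_llr _ _).aestronglyMeasurable
    rw [klDiv, klDiv, if_pos ⟨hμνf, hBmap_int⟩, if_pos ⟨hμν, hint⟩]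
    refine ENNReal.ofReal_le_ofReal ?_
    show ∫ y, llr (μ.map f) (ν.map f) y ∂(μ.map f) ≤ ∫ x, llr μ ν x ∂μ
    rw [hBmap, hsum]
    linarith
  · calc klDiv (μ.map f) (ν.map f) ≤ ⊤ := le_top
      _ = klDiv μ ν := by rw [klDiv, if_neg hc]
end

section
/- Let μ, ν be probability measures on a metric space and f : X → M be a measurable map into a metric space M with diameter β, with κ : X → A measurable such that f factors through κ. Then W₁(f_#μ, f_#ν) ≤ β · sqrt(min((1/2)·D_KL(κ_#μ‖κ_#ν), 1 − exp(−D_KL(κ_#μ‖κ_#ν)))). -/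
open MeasureTheory ENNReal
open scoped Classical

section AuxiliaryLemmas

section Aux
variable {α : Type*} [MeasurableSpace α]

lemma aux_min_add_tsub (p q : ℝ≥0∞) : p ⊓ q + (p - q) = p := by
  rcases le_total p q with h | h
  · simp [inf_eq_left.2 h, tsub_eq_zero_of_le h]
  · rw [inf_eq_right.2 h, add_comm, tsub_add_cancel_of_le h]

lemma aux_lintegral_tsub_comm {μ : Measure α} {f g : α → ℝ≥0∞}
    (hf : Measurable f) (hg : Measurable g)
    (h : ∫⁻ x, f x ∂μ = ∫⁻ x, g x ∂μ) (hfin : ∫⁻ x, f x ∂μ ≠ ⊤) :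
    ∫⁻ x, (f x - g x) ∂μ = ∫⁻ x, (g x - f x) ∂μ := by
  have h1 : ∫⁻ x, f x ∂μ = ∫⁻ x, (f x ⊓ g x) ∂μ + ∫⁻ x, (f x - g x) ∂μ := by
    rw [← lintegral_add_left (hf.min hg)]
    exact lintegral_congr fun x => (aux_min_add_tsub _ _).symm
  have h2 : ∫⁻ x, g x ∂μ = ∫⁻ x, (f x ⊓ g x) ∂μ + ∫⁻ x, (g x - f x) ∂μ := by
    rw [← lintegral_add_left (hf.min hg)]
    refine lintegral_congr fun x => ?_
    rw [inf_comm]; exact (aux_min_add_tsub _ _).symm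
  have hc : ∫⁻ x, (f x ⊓ g x) ∂μ ≠ ⊤ := by
    refine ne_top_of_le_ne_top hfin (lintegral_mono fun x => inf_le_left)
  have := h1.symm.trans (h.trans h2)
  exact (ENNReal.add_right_inj hc).1 this

lemma aux_tvDist_withDensity {ρ : Measure α} {p q : α → ℝ≥0∞}
    (hp : Measurable p) (hq : Measurable q) (hqfin : ∫⁻ x, q x ∂ρ ≠ ⊤) :
    tvDist (ρ.withDensity p) (ρ.withDensity q) = ∫⁻ x, (p x - q x) ∂ρ := by
  apply le_antisymm
  · refine iSup_le fun A => iSup_le fun hA => ?_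
    rw [withDensity_apply _ hA, withDensity_apply _ hA, tsub_le_iff_right]
    calc ∫⁻ x in A, p x ∂ρ ≤ ∫⁻ x in A, ((p x - q x) + q x) ∂ρ :=
          lintegral_mono fun x => le_tsub_add
      _ = ∫⁻ x in A, (p x - q x) ∂ρ + ∫⁻ x in A, q x ∂ρ :=
          lintegral_add_left (hp.sub hq) _
      _ ≤ ∫⁻ x, (p x - q x) ∂ρ + ∫⁻ x in A, q x ∂ρ := by
          exact add_le_add (setLIntegral_le_lintegral _ _) le_rfl
  · set A := {x | q x < p x} with hAdef
    have hA : MeasurableSet A := measurableSet_lt hq hp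
    have key : ∫⁻ x, (p x - q x) ∂ρ = ∫⁻ x in A, (p x - q x) ∂ρ := by
      rw [← lintegral_add_compl _ hA]
      have : ∫⁻ x in Aᶜ, (p x - q x) ∂ρ = 0 := by
        have hz : ∀ x ∈ Aᶜ, p x - q x = (fun _ => (0:ℝ≥0∞)) x := by
          intro x hx
          simp only [A, Set.mem_compl_iff, Set.mem_setOf_eq, not_lt] at hx
          exact tsub_eq_zero_of_le hx
        rw [setLIntegral_congr_fun hA.compl hz, lintegral_zero]
      rw [this, add_zero]
    have hsplit : ∫⁻ x in A, p x ∂ρ = ∫⁻ x in A, (p x - q x) ∂ρ + ∫⁻ x in A, q x ∂ρ := by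
      rw [← lintegral_add_right _ hq]
      refine setLIntegral_congr_fun hA (fun x hx => ?_)
      exact (tsub_add_cancel_of_le (le_of_lt hx)).symm
    have hqA : ∫⁻ x in A, q x ∂ρ ≠ ⊤ :=
      ne_top_of_le_ne_top hqfin (setLIntegral_le_lintegral _ _)
    refine le_trans ?_ (le_iSup₂ (α := ℝ≥0∞) A hA)
    rw [withDensity_apply _ hA, withDensity_apply _ hA, hsplit, key,
      ENNReal.add_sub_cancel_right hqA]

lemma aux_tvDist_le_one {μ ν : Measure α} [IsProbabilityMeasure μ] :
    tvDist μ ν ≤ 1 := by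
  refine iSup_le fun A => iSup_le fun _ => ?_
  exact le_trans (tsub_le_self.trans (measure_mono (Set.subset_univ A))) (by simp)

lemma aux_tvDist_map_le {B : Type*} [MeasurableSpace B] {μ ν : Measure α}
    (g : α → B) (hg : Measurable g) :
    tvDist (μ.map g) (ν.map g) ≤ tvDist μ ν := by
  refine iSup_le fun A => iSup_le fun hA => ?_
  rw [Measure.map_apply hg hA, Measure.map_apply hg hA]
  exact le_iSup₂ (α := ℝ≥0∞) (g ⁻¹' A) (hg hA)

end Aux

-- g(x) = (x+1) log x - 2(x-1)
private noncomputable def auxg (x : ℝ) : ℝ := (x + 1) * Real.log x - 2 * (x - 1)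

lemma auxg_hasDeriv {x : ℝ} (hx : 0 < x) :
    HasDerivAt auxg (Real.log x + (x + 1) * x⁻¹ - 2) x := by
  have h1 : HasDerivAt (fun y : ℝ => (y + 1) * Real.log y)
      (1 * Real.log x + (x + 1) * x⁻¹) x :=
    ((hasDerivAt_id x).add_const 1).mul (Real.hasDerivAt_log (ne_of_gt hx))
  have h2 : HasDerivAt (fun y : ℝ => 2 * (y - 1)) 2 x := by
    simpa using ((hasDerivAt_id x).sub_const 1).const_mul 2
  have h3 : HasDerivAt auxg (1 * Real.log x + (x + 1) * x⁻¹ - 2) x := h1.sub h2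
  simpa [one_mul] using h3
lemma auxg_deriv_nonneg {x : ℝ} (hx : 0 < x) : 0 ≤ deriv auxg x := by
  rw [(auxg_hasDeriv hx).deriv]
  have hlog : 1 - x⁻¹ ≤ Real.log x := by
    have := Real.log_le_sub_one_of_pos (inv_pos.2 hx)
    rw [Real.log_inv] at this
    linarith
  have : (x + 1) * x⁻¹ = 1 + x⁻¹ := by field_simp
  rw [this]; linarith

lemma auxg_mono : MonotoneOn auxg (Set.Ioi 0) := by
  refine monotoneOn_of_deriv_nonneg (convex_Ioi 0) ?_ ?_ ?_
  · intro x hx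
    exact (auxg_hasDeriv hx).continuousAt.continuousWithinAt
  · intro x hx
    rw [interior_Ioi] at hx
    exact (auxg_hasDeriv hx).differentiableAt.differentiableWithinAt
  · intro x hx
    rw [interior_Ioi] at hx
    exact auxg_deriv_nonneg hx

lemma auxg_nonneg {x : ℝ} (hx : 1 ≤ x) : 2 * (x - 1) ≤ (x + 1) * Real.log x := by
  have := auxg_mono (Set.mem_Ioi.2 one_pos) (Set.mem_Ioi.2 (lt_of_lt_of_le one_pos hx)) hx
  simp [auxg] at this; linarith

lemma auxg_nonpos {x : ℝ} (hx0 : 0 < x) (hx : x ≤ 1) : (x + 1) * Real.log x ≤ 2 * (x - 1) := by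
  have := auxg_mono (Set.mem_Ioi.2 hx0) (Set.mem_Ioi.2 one_pos) hx
  simp [auxg] at this; linarith

-- F(y) = (2y+4)(y log y - y + 1) - 3(y-1)^2
private noncomputable def auxF (y : ℝ) : ℝ :=
  (2 * y + 4) * (y * Real.log y - y + 1) - 3 * (y - 1) ^ 2

lemma auxF_hasDeriv {y : ℝ} (hy : 0 < y) :
    HasDerivAt auxF (2 * (y * Real.log y - y + 1) + (2 * y + 4) * Real.log y - 6 * (y - 1)) y := by
  have hxlog : HasDerivAt (fun x : ℝ => x * Real.log x) (Real.log y + 1) y := by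
    have : HasDerivAt (fun x : ℝ => x * Real.log x) _ y :=
      (hasDerivAt_id y).mul (Real.hasDerivAt_log (ne_of_gt hy))
    simpa [mul_inv_cancel₀ (ne_of_gt hy)] using this
  have h1 : HasDerivAt (fun x : ℝ => x * Real.log x - x + 1) (Real.log y) y := by
    simpa using (hxlog.sub (hasDerivAt_id y)).add_const 1
  have h2 : HasDerivAt (fun x : ℝ => 2 * x + 4) 2 y := by
    simpa using ((hasDerivAt_id y).const_mul 2).add_const 4
  have h3 : HasDerivAt (fun x : ℝ => (2 * x + 4) * (x * Real.log x - x + 1))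
      (2 * (y * Real.log y - y + 1) + (2 * y + 4) * Real.log y) y := h2.mul h1
  have h4 : HasDerivAt (fun x : ℝ => 3 * (x - 1) ^ 2) (6 * (y - 1)) y := by
    have h := (((hasDerivAt_id y).sub_const 1).pow 2).const_mul 3
    have e : (3:ℝ) * (2 * (y - 1)) = 6 * (y - 1) := by ring
    simpa [e] using h
  have h5 : HasDerivAt auxF
      (2 * (y * Real.log y - y + 1) + (2 * y + 4) * Real.log y - 6 * (y - 1)) y := h3.sub h4
  simpa using h5

lemma auxF_deriv_eq {y : ℝ} :
    2 * (y * Real.log y - y + 1) + (2 * y + 4) * Real.log y - 6 * (y - 1)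
      = 4 * ((y + 1) * Real.log y - 2 * (y - 1)) := by ring

lemma auxF_nonneg {y : ℝ} (hy : 0 ≤ y) : 0 ≤ auxF y := by
  rcases eq_or_lt_of_le hy with h | hy0
  · simp [auxF, ← h]; norm_num
  have hF1 : auxF 1 = 0 := by simp [auxF]
  rcases le_total y 1 with h1 | h1
  ·
    have hanti : AntitoneOn auxF (Set.Icc y 1) := by
      refine antitoneOn_of_deriv_nonpos (convex_Icc y 1) ?_ ?_ ?_
      · intro x hx
        have hx0 : 0 < x := lt_of_lt_of_le hy0 hx.1
        exact (auxF_hasDeriv hx0).continuousAt.continuousWithinAt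
      · intro x hx
        rw [interior_Icc] at hx
        have hx0 : 0 < x := lt_of_lt_of_le hy0 (le_of_lt hx.1)
        exact (auxF_hasDeriv hx0).differentiableAt.differentiableWithinAt
      · intro x hx
        rw [interior_Icc] at hx
        have hx0 : 0 < x := lt_of_lt_of_le hy0 (le_of_lt hx.1)
        rw [(auxF_hasDeriv hx0).deriv, auxF_deriv_eq]
        have := auxg_nonpos hx0 (le_of_lt hx.2)
        linarith
    have := hanti (Set.mem_Icc.2 ⟨le_refl y, h1⟩) (Set.mem_Icc.2 ⟨h1, le_refl 1⟩) h1
    rw [hF1] at this; exact this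
  · have hmono : MonotoneOn auxF (Set.Ici 1) := by
      refine monotoneOn_of_deriv_nonneg (convex_Ici 1) ?_ ?_ ?_
      · intro x hx
        have hx0 : 0 < x := lt_of_lt_of_le one_pos hx
        exact (auxF_hasDeriv hx0).continuousAt.continuousWithinAt
      · intro x hx
        rw [interior_Ici] at hx
        have hx0 : 0 < x := lt_trans one_pos hx
        exact (auxF_hasDeriv hx0).differentiableAt.differentiableWithinAt
      · intro x hx
        rw [interior_Ici] at hx
        have hx0 : 0 < x := lt_trans one_pos hx
        rw [(auxF_hasDeriv hx0).deriv, auxF_deriv_eq]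
        have := auxg_nonneg (le_of_lt hx)
        linarith
    have := hmono (Set.mem_Ici.2 (le_refl 1)) (Set.mem_Ici.2 h1) h1
    rw [hF1] at this; exact this

lemma aux_pinsker_pointwise {y : ℝ} (hy : 0 ≤ y) :
    3 * (y - 1) ^ 2 ≤ (2 * y + 4) * (y * Real.log y - y + 1) := by
  have := auxF_nonneg hy
  simp only [auxF] at this; linarith

lemma aux_xlogx_nonneg {y : ℝ} (hy : 0 ≤ y) : 0 ≤ y * Real.log y - y + 1 := by
  nlinarith [aux_pinsker_pointwise hy, sq_nonneg (y - 1)]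

lemma aux_sq_half (x : ℝ≥0∞) : x ^ (1/2 : ℝ) * x ^ (1/2 : ℝ) = x := by
  rw [← ENNReal.rpow_add_of_nonneg _ _ (by norm_num) (by norm_num)]
  norm_num

lemma aux_le_rpow_half {x y : ℝ≥0∞} (h : x * x ≤ y) : x ≤ y ^ (1/2 : ℝ) := by
  have h2 : (x * x) ^ (1/2 : ℝ) ≤ y ^ (1/2 : ℝ) := ENNReal.rpow_le_rpow h (by norm_num)
  refine le_trans (le_of_eq ?_) h2
  rw [ENNReal.mul_rpow_of_nonneg _ _ (by norm_num : (0:ℝ) ≤ 1/2), aux_sq_half]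

lemma aux_tv_le_pinsker_BH {α : Type*} [MeasurableSpace α] (P Q : Measure α)
    [IsProbabilityMeasure P] [IsProbabilityMeasure Q]
    (hac : P ≪ Q) (hint : Integrable (fun x => Real.log ((P.rnDeriv Q x).toReal)) P) :
    0 ≤ ∫ x, Real.log ((P.rnDeriv Q x).toReal) ∂P ∧
    tvDist P Q ≤
      (ENNReal.ofReal (∫ x, Real.log ((P.rnDeriv Q x).toReal) ∂P) / 2) ^ (1/2 : ℝ) ∧
    tvDist P Q ≤
      (1 - ENNReal.ofReal (Real.exp (-(∫ x, Real.log ((P.rnDeriv Q x).toReal) ∂P)))) ^ (1/2 : ℝ) := by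
  set r := P.rnDeriv Q with hrdef
  have hrm : Measurable r := Measure.measurable_rnDeriv P Q
  have hrlt : ∀ᵐ x ∂Q, r x < ⊤ := Measure.rnDeriv_lt_top P Q
  have hP : Q.withDensity r = P := Measure.withDensity_rnDeriv_eq P Q hac
  have hr1 : ∫⁻ x, r x ∂Q = 1 := by rw [Measure.lintegral_rnDeriv hac]; simp
  have hone : ∫⁻ _ : α, (1:ℝ≥0∞) ∂Q = 1 := by simp
  set φ := fun x => (r x).toReal with hφdef
  have hφm : Measurable φ := hrm.ennreal_toReal
  set k := ∫ x, Real.log (φ x) ∂P with hkdef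
  -- tvDist = t
  set t := ∫⁻ x, (r x - 1) ∂Q with ht
  have htv : tvDist P Q = t := by
    have h0 := aux_tvDist_withDensity (ρ := Q) (p := r) (q := fun _ => (1:ℝ≥0∞)) hrm
      measurable_const (by simp)
    have h1 : Q.withDensity (fun _ : α => (1:ℝ≥0∞)) = Q := by
      rw [show (fun _ : α => (1:ℝ≥0∞)) = 1 from rfl, MeasureTheory.withDensity_one]
    rw [h1, hP] at h0
    exact h0
  have htt' : t = ∫⁻ x, (1 - r x) ∂Q :=
    aux_lintegral_tsub_comm hrm measurable_const (hr1.trans hone.symm) (hr1 ▸ one_ne_top)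
  have ht1 : t ≤ 1 := by
    rw [ht, ← hr1]; exact lintegral_mono fun x => tsub_le_self
  have htop : t ≠ ⊤ := ne_top_of_le_ne_top one_ne_top ht1
  -- change of measure
  have hPwd : P = Q.withDensity (fun x => ((r x).toNNReal : ℝ≥0∞)) := by
    rw [← hP]
    refine withDensity_congr_ae ?_
    filter_upwards [hrlt] with x hx
    rw [ENNReal.coe_toNNReal hx.ne]
  have hchange : ∀ h : α → ℝ, ∫ x, h x ∂P = ∫ x, φ x * h x ∂Q := by
    intro h
    rw [hPwd, integral_withDensity_eq_integral_smul (hrm.ennreal_toNNReal) h]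
    rfl
  have hchange_int : ∀ h : α → ℝ, Integrable h P ↔ Integrable (fun x => h x * φ x) Q := by
    intro h
    rw [← hP]
    exact integrable_withDensity_iff hrm hrlt
  -- KL as integral over Q
  have hql : Integrable (fun x => φ x * Real.log (φ x)) Q := by
    have := (hchange_int (fun x => Real.log (φ x))).1 hint
    refine this.congr (Filter.Eventually.of_forall fun x => ?_)
    ring
  have hφint : Integrable φ Q := Measure.integrable_toReal_rnDeriv
  have hφ1 : ∫ x, φ x ∂Q = 1 := by
    rw [hφdef, Measure.integral_toReal_rnDeriv hac]; simp
  have hkQ : k = ∫ x, φ x * Real.log (φ x) ∂Q := by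
    rw [hkdef, hchange (fun x => Real.log (φ x))]
  set G := fun x => ENNReal.ofReal (φ x * Real.log (φ x) - φ x + 1) with hGdef
  have hsubint : Integrable (fun x => φ x * Real.log (φ x) - φ x) Q := hql.sub hφint
  have hGfunint : Integrable (fun x => φ x * Real.log (φ x) - φ x + 1) Q :=
    hsubint.add (integrable_const 1)
  have hGnn : ∀ x, 0 ≤ φ x * Real.log (φ x) - φ x + 1 :=
    fun x => aux_xlogx_nonneg ENNReal.toReal_nonneg
  have hsum : ∫ x, (φ x * Real.log (φ x) - φ x + 1) ∂Q = k := by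
    rw [integral_add hsubint (integrable_const 1), integral_sub hql hφint, hφ1, hkQ]
    simp
  have hGint : ∫⁻ x, G x ∂Q = ENNReal.ofReal k := by
    rw [← ofReal_integral_eq_lintegral_ofReal hGfunint (Filter.Eventually.of_forall hGnn), hsum]
  have hknn : 0 ≤ k := hsum ▸ integral_nonneg hGnn
  -- Pinsker
  have hG2 : ∫⁻ x, ((2 * r x + 4) / 3) ∂Q = 2 := by
    simp only [div_eq_mul_inv]
    rw [lintegral_mul_const _ (f := fun x => 2 * r x + 4) ((hrm.const_mul 2).add measurable_const),
      lintegral_add_right _ measurable_const, lintegral_const_mul 2 hrm, hr1, lintegral_const]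
    simp only [measure_univ, mul_one, one_mul]
    rw [show ((2:ℝ≥0∞) + 4) = 2 * 3 by norm_num, mul_assoc,
      ENNReal.mul_inv_cancel (by norm_num) (by norm_num), mul_one]
  set fP := fun x => ((2 * r x + 4) / 3) ^ (1/2 : ℝ) with hfPdef
  set gP := fun x => (G x) ^ (1/2 : ℝ) with hgPdef
  have hfPm : Measurable fP := by
    simp only [hfPdef, div_eq_mul_inv]
    exact (((hrm.const_mul 2).add measurable_const).mul measurable_const).pow measurable_const
  have hgPm : Measurable gP := by
    refine Measurable.pow ?_ measurable_const
    exact ENNReal.measurable_ofReal.comp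
      (((hφm.mul (Real.measurable_log.comp hφm)).sub hφm).add measurable_const)
  have h_ptw : ∀ᵐ x ∂Q, (r x - 1) + (1 - r x) ≤ fP x * gP x := by
    filter_upwards [hrlt] with x hx
    set y := φ x with hy
    have hy0 : 0 ≤ y := ENNReal.toReal_nonneg
    have hrx : r x = ENNReal.ofReal y := (ENNReal.ofReal_toReal hx.ne).symm
    have hZ : 0 ≤ y * Real.log y - y + 1 := aux_xlogx_nonneg hy0
    have hlhs : (r x - 1) + (1 - r x) = ENNReal.ofReal |y - 1| := by
      rcases le_total (r x) 1 with h | h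
      · have hy1 : y ≤ 1 := by
          rw [hrx] at h
          exact (ENNReal.ofReal_le_one.1 h)
        rw [tsub_eq_zero_of_le h, zero_add, hrx, ← ENNReal.ofReal_one,
          ← ENNReal.ofReal_sub _ hy0, abs_of_nonpos (by linarith)]
        norm_num
      · have hy1 : 1 ≤ y := by
          rw [hrx, ← ENNReal.ofReal_one] at h
          exact (ENNReal.ofReal_le_ofReal_iff hy0).1 h
        rw [tsub_eq_zero_of_le h, add_zero, hrx, ← ENNReal.ofReal_one,
          ← ENNReal.ofReal_sub _ zero_le_one, abs_of_nonneg (by linarith)]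
    have hfPx : fP x = ENNReal.ofReal (((2 * y + 4) / 3) ^ (1/2 : ℝ)) := by
      have h24 : 2 * r x + 4 = ENNReal.ofReal (2 * y + 4) := by
        rw [hrx, ENNReal.ofReal_add (by positivity) (by norm_num),
          ENNReal.ofReal_mul (by norm_num)]
        norm_num
      have h3 : (ENNReal.ofReal (2 * y + 4)) / 3 = ENNReal.ofReal ((2 * y + 4) / 3) := by
        rw [ENNReal.ofReal_div_of_pos (by norm_num)]
        norm_num
      show ((2 * r x + 4) / 3) ^ (1/2 : ℝ) = _
      rw [h24, h3, ENNReal.ofReal_rpow_of_nonneg (by positivity) (by norm_num)]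
    have hgPx : gP x = ENNReal.ofReal ((y * Real.log y - y + 1) ^ (1/2 : ℝ)) := by
      show (ENNReal.ofReal (φ x * Real.log (φ x) - φ x + 1)) ^ (1/2 : ℝ) = _
      rw [ENNReal.ofReal_rpow_of_nonneg hZ (by norm_num)]
    rw [hlhs, hfPx, hgPx, ← ENNReal.ofReal_mul (by positivity)]
    refine ENNReal.ofReal_le_ofReal ?_
    rw [← Real.sqrt_eq_rpow, ← Real.sqrt_eq_rpow, ← Real.sqrt_mul (by positivity)]
    rw [← Real.sqrt_sq_eq_abs]
    refine Real.sqrt_le_sqrt ?_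
    have hp := aux_pinsker_pointwise hy0
    nlinarith [hZ]
  have h2t : 2 * t ≤ (2:ℝ≥0∞) ^ (1/2 : ℝ) * (ENNReal.ofReal k) ^ (1/2 : ℝ) := by
    have e1 : 2 * t = ∫⁻ x, ((r x - 1) + (1 - r x)) ∂Q := by
      rw [lintegral_add_left (f := fun x => r x - 1) (hrm.sub measurable_const), two_mul, ← ht, ← htt']
    have e2 : ∫⁻ x, ((r x - 1) + (1 - r x)) ∂Q ≤ ∫⁻ x, (fP * gP) x ∂Q :=
      lintegral_mono_ae h_ptw
    have e3 := ENNReal.lintegral_mul_le_Lp_mul_Lq Q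
      Real.HolderConjugate.two_two
      hfPm.aemeasurable hgPm.aemeasurable
    have e4 : ∫⁻ x, fP x ^ (2:ℝ) ∂Q = 2 := by
      rw [← hG2]
      refine lintegral_congr fun x => ?_
      show (((2 * r x + 4) / 3) ^ (1/2:ℝ)) ^ (2:ℝ) = (2 * r x + 4) / 3
      rw [← ENNReal.rpow_mul]
      norm_num
    have e5 : ∫⁻ x, gP x ^ (2:ℝ) ∂Q = ENNReal.ofReal k := by
      rw [← hGint]
      refine lintegral_congr fun x => ?_
      show ((G x) ^ (1/2:ℝ)) ^ (2:ℝ) = G x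
      rw [← ENNReal.rpow_mul]
      norm_num
    calc 2 * t = ∫⁻ x, ((r x - 1) + (1 - r x)) ∂Q := e1
      _ ≤ ∫⁻ x, (fP * gP) x ∂Q := e2
      _ ≤ (∫⁻ x, fP x ^ (2:ℝ) ∂Q) ^ (1/(2:ℝ)) * (∫⁻ x, gP x ^ (2:ℝ) ∂Q) ^ (1/(2:ℝ)) := e3
      _ = (2:ℝ≥0∞) ^ (1/2 : ℝ) * (ENNReal.ofReal k) ^ (1/2 : ℝ) := by rw [e4, e5]
  have hpinsker : t * t ≤ ENNReal.ofReal k / 2 := by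
    have hsq := mul_le_mul' h2t h2t
    rw [show (2*t)*(2*t) = (2*2)*(t*t) by ring] at hsq
    rw [show ((2:ℝ≥0∞) ^ (1/2 : ℝ) * (ENNReal.ofReal k) ^ (1/2 : ℝ)) *
        ((2:ℝ≥0∞) ^ (1/2 : ℝ) * (ENNReal.ofReal k) ^ (1/2 : ℝ))
        = ((2:ℝ≥0∞) ^ (1/2 : ℝ) * (2:ℝ≥0∞) ^ (1/2 : ℝ)) *
          ((ENNReal.ofReal k) ^ (1/2 : ℝ) * (ENNReal.ofReal k) ^ (1/2 : ℝ)) by ring,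
      aux_sq_half, aux_sq_half] at hsq
    rw [ENNReal.le_div_iff_mul_le (Or.inl two_ne_zero) (Or.inl ENNReal.ofNat_ne_top)]
    refine (ENNReal.mul_le_mul_iff_right (a := 2) two_ne_zero ENNReal.ofNat_ne_top).1 ?_
    calc 2 * (t * t * 2) = (2 * 2) * (t * t) := by ring
      _ ≤ 2 * ENNReal.ofReal k := hsq
  refine ⟨hknn, ?_, ?_⟩
  · rw [htv]; exact aux_le_rpow_half hpinsker
  -- Bretagnolle–Huber
  · have hmin : ∫⁻ x, (r x ⊓ 1) ∂Q = 1 - t := by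
      have hpt : ∀ x, (r x ⊓ 1) + (1 - r x) = 1 := by
        intro x
        rcases le_total (r x) 1 with h | h
        · rw [inf_eq_left.2 h, add_tsub_cancel_of_le h]
        · rw [inf_eq_right.2 h, tsub_eq_zero_of_le h, add_zero]
      have : ∫⁻ x, (r x ⊓ 1) ∂Q + ∫⁻ x, (1 - r x) ∂Q = 1 := by
        rw [← lintegral_add_left (hrm.min measurable_const)]
        simp only [hpt]
        simp
      rw [← htt'] at this
      exact ENNReal.eq_sub_of_add_eq htop this
    have hmax : ∫⁻ x, (r x ⊔ 1) ∂Q = 1 + t := by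
      have hpt : ∀ x, r x ⊔ 1 = (r x - 1) + 1 := by
        intro x
        rcases le_total (r x) 1 with h | h
        · rw [sup_eq_right.2 h, tsub_eq_zero_of_le h, zero_add]
        · rw [sup_eq_left.2 h, tsub_add_cancel_of_le h]
      simp only [hpt]
      rw [lintegral_add_right _ measurable_const]
      simp [← ht, add_comm]
    set s := ∫⁻ x, (r x) ^ (1/2 : ℝ) ∂Q with hs
    have hsle : s ≤ (1 - t) ^ (1/2 : ℝ) * (1 + t) ^ (1/2 : ℝ) := by
      have e3 := ENNReal.lintegral_mul_le_Lp_mul_Lq Q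
        Real.HolderConjugate.two_two
        ((hrm.min measurable_const).pow measurable_const).aemeasurable
        ((hrm.max measurable_const).pow measurable_const).aemeasurable
        (f := fun x => (r x ⊓ 1) ^ (1/2 : ℝ)) (g := fun x => (r x ⊔ 1) ^ (1/2 : ℝ))
      have e0 : ∀ x, ((r x ⊓ 1) ^ (1/2:ℝ)) * ((r x ⊔ 1) ^ (1/2:ℝ)) = (r x) ^ (1/2:ℝ) := by
        intro x
        rw [← ENNReal.mul_rpow_of_nonneg _ _ (by norm_num : (0:ℝ) ≤ 1/2)]
        congr 1
        rcases le_total (r x) 1 with h | h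
        · rw [inf_eq_left.2 h, sup_eq_right.2 h, mul_one]
        · rw [inf_eq_right.2 h, sup_eq_left.2 h, one_mul]
      have e4 : ∫⁻ x, ((r x ⊓ 1) ^ (1/2:ℝ)) ^ (2:ℝ) ∂Q = 1 - t := by
        rw [← hmin]
        refine lintegral_congr fun x => ?_
        rw [← ENNReal.rpow_mul]
        norm_num
      have e5 : ∫⁻ x, ((r x ⊔ 1) ^ (1/2:ℝ)) ^ (2:ℝ) ∂Q = 1 + t := by
        rw [← hmax]
        refine lintegral_congr fun x => ?_
        rw [← ENNReal.rpow_mul]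
        norm_num
      calc s = ∫⁻ x, ((fun x => (r x ⊓ 1) ^ (1/2:ℝ)) * (fun x => (r x ⊔ 1) ^ (1/2:ℝ))) x ∂Q := by
            rw [hs]; exact (lintegral_congr fun x => (e0 x).symm)
        _ ≤ _ := e3
        _ = (1 - t) ^ (1/2 : ℝ) * (1 + t) ^ (1/2 : ℝ) := by rw [e4, e5]
    have hsfin : s ≠ ⊤ := by
      refine ne_top_of_le_ne_top ?_ hsle
      exact ENNReal.mul_ne_top
        (ENNReal.rpow_ne_top_of_nonneg (by norm_num)
          (ne_top_of_le_ne_top one_ne_top tsub_le_self))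
        (ENNReal.rpow_ne_top_of_nonneg (by norm_num)
          (ENNReal.add_ne_top.2 ⟨one_ne_top, htop⟩))
    set v := fun x : α => (φ x) ^ (-(1/2) : ℝ) with hv
    have hvm : Measurable v := hφm.pow measurable_const
    have hvnn : ∀ x, 0 ≤ v x := fun x => Real.rpow_nonneg ENNReal.toReal_nonneg _
    have hlv : ∫⁻ x, ENNReal.ofReal (v x) ∂P = s := by
      have hm1 : Measurable (fun x => ENNReal.ofReal (v x)) :=
        ENNReal.measurable_ofReal.comp hvm
      rw [← hP, lintegral_withDensity_eq_lintegral_mul Q hrm hm1]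
      refine lintegral_congr_ae ?_
      filter_upwards [hrlt] with x hx
      show r x * ENNReal.ofReal (v x) = r x ^ (1/2 : ℝ)
      rcases eq_or_ne (r x) 0 with h0 | h0
      · rw [h0, zero_mul, ENNReal.zero_rpow_of_pos (by norm_num)]
      · have hy : 0 < φ x := ENNReal.toReal_pos h0 hx.ne
        have hveq : ENNReal.ofReal (v x) = (r x) ^ (-(1/2) : ℝ) := by
          show ENNReal.ofReal ((φ x) ^ (-(1/2) : ℝ)) = _
          rw [← ENNReal.ofReal_rpow_of_pos hy, ENNReal.ofReal_toReal hx.ne]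
        rw [hveq]
        calc r x * r x ^ (-(1/2) : ℝ)
            = r x ^ (1:ℝ) * r x ^ (-(1/2) : ℝ) := by rw [ENNReal.rpow_one]
          _ = r x ^ ((1:ℝ) + -(1/2)) := (ENNReal.rpow_add _ _ h0 hx.ne).symm
          _ = r x ^ (1/2 : ℝ) := by norm_num
    have hvint : Integrable v P := by
      have hm1 : Measurable (fun x => ENNReal.ofReal (v x)) :=
        ENNReal.measurable_ofReal.comp hvm
      have h := integrable_toReal_of_lintegral_ne_top hm1.aemeasurable (hlv ▸ hsfin)
      refine h.congr (Filter.Eventually.of_forall fun x => ?_)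
      exact ENNReal.toReal_ofReal (hvnn x)
    have hofr : ENNReal.ofReal (∫ x, v x ∂P) = s := by
      rw [ofReal_integral_eq_lintegral_ofReal hvint (Filter.Eventually.of_forall hvnn), hlv]
    set c := -(1/2 : ℝ) * k with hc
    have hintY : Integrable (fun x => -(1/2 : ℝ) * Real.log (φ x)) P := hint.const_mul _
    have hkc : ∫ x, (-(1/2 : ℝ) * Real.log (φ x)) ∂P = c := by
      rw [integral_const_mul, hc, hkdef]
    have hrpos : ∀ᵐ x ∂P, 0 < r x := Measure.rnDeriv_pos hac
    have hrltP : ∀ᵐ x ∂P, r x < ⊤ := hac.ae_le hrlt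
    have hptw : ∀ᵐ x ∂P,
        Real.exp c * (1 + (-(1/2 : ℝ) * Real.log (φ x) - c)) ≤ v x := by
      filter_upwards [hrpos, hrltP] with x h0 hx
      have hy : 0 < φ x := ENNReal.toReal_pos h0.ne' hx.ne
      have hev : v x = Real.exp (-(1/2 : ℝ) * Real.log (φ x)) := by
        show (φ x) ^ (-(1/2) : ℝ) = _
        rw [Real.rpow_def_of_pos hy, mul_comm]
      rw [hev]
      have h1 := Real.add_one_le_exp (-(1/2 : ℝ) * Real.log (φ x) - c)
      calc Real.exp c * (1 + (-(1/2 : ℝ) * Real.log (φ x) - c))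
          ≤ Real.exp c * Real.exp (-(1/2 : ℝ) * Real.log (φ x) - c) :=
            mul_le_mul_of_nonneg_left (by linarith) (Real.exp_nonneg c)
        _ = Real.exp (-(1/2 : ℝ) * Real.log (φ x)) := by
            rw [← Real.exp_add]
            ring_nf
    have hYc : Integrable (fun x => -(1/2 : ℝ) * Real.log (φ x) - c) P :=
      hintY.sub (integrable_const c)
    have hinner : Integrable (fun x => 1 + (-(1/2 : ℝ) * Real.log (φ x) - c)) P :=
      (integrable_const 1).add hYc
    have hLHSint : Integrable
        (fun x => Real.exp c * (1 + (-(1/2 : ℝ) * Real.log (φ x) - c))) P :=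
      hinner.const_mul _
    have hjen : Real.exp c ≤ ∫ x, v x ∂P := by
      have hmono := integral_mono_ae hLHSint hvint hptw
      rw [integral_const_mul, integral_add (integrable_const 1) hYc,
        integral_sub hintY (integrable_const c), hkc, integral_const] at hmono
      simpa using hmono
    have hjen2 : ENNReal.ofReal (Real.exp c) ≤ s := by
      rw [← hofr]
      exact ENNReal.ofReal_le_ofReal hjen
    have hsq := mul_le_mul' (le_trans hjen2 hsle) (le_trans hjen2 hsle)
    rw [show ((1-t)^(1/2:ℝ) * (1+t)^(1/2:ℝ)) * ((1-t)^(1/2:ℝ) * (1+t)^(1/2:ℝ))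
        = ((1-t)^(1/2:ℝ) * (1-t)^(1/2:ℝ)) * ((1+t)^(1/2:ℝ) * (1+t)^(1/2:ℝ)) by ring,
      aux_sq_half, aux_sq_half, ← ENNReal.ofReal_mul (Real.exp_nonneg _),
      ← Real.exp_add, show c + c = -k by rw [hc]; ring] at hsq
    set tr := t.toReal with htr
    have htt : t = ENNReal.ofReal tr := (ENNReal.ofReal_toReal htop).symm
    have htr1 : tr ≤ 1 := by
      have := ENNReal.toReal_mono one_ne_top ht1
      simpa using this
    have htrnn : 0 ≤ tr := ENNReal.toReal_nonneg
    have h1t : (1:ℝ≥0∞) - t = ENNReal.ofReal (1 - tr) := by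
      rw [ENNReal.ofReal_sub _ htrnn, ENNReal.ofReal_one, ← htt]
    have h2t' : (1:ℝ≥0∞) + t = ENNReal.ofReal (1 + tr) := by
      rw [ENNReal.ofReal_add zero_le_one htrnn, ENNReal.ofReal_one, ← htt]
    rw [h1t, h2t', ← ENNReal.ofReal_mul (by linarith)] at hsq
    have hreal : Real.exp (-k) ≤ (1 - tr) * (1 + tr) :=
      (ENNReal.ofReal_le_ofReal_iff (mul_nonneg (by linarith) (by linarith))).1 hsq
    have htr2 : tr * tr ≤ 1 - Real.exp (-k) := by nlinarith
    rw [htv, htt]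
    refine aux_le_rpow_half ?_
    rw [← ENNReal.ofReal_mul htrnn]
    calc ENNReal.ofReal (tr * tr) ≤ ENNReal.ofReal (1 - Real.exp (-k)) :=
          ENNReal.ofReal_le_ofReal htr2
      _ = 1 - ENNReal.ofReal (Real.exp (-k)) := by
          rw [ENNReal.ofReal_sub _ (Real.exp_nonneg _), ENNReal.ofReal_one]

lemma aux_W1_le_diam_mul_tvDist {M : Type*} [MeasurableSpace M] [PseudoEMetricSpace M]
    (P Q : Measure M) [IsProbabilityMeasure P] [IsProbabilityMeasure Q] :
    W1 P Q ≤ EMetric.diam (Set.univ : Set M) * tvDist P Q := by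
  set d := EMetric.diam (Set.univ : Set M) with hd
  set ρ : Measure M := P + Q with hρ
  have hPρ : P ≪ ρ := Measure.absolutelyContinuous_of_le (Measure.le_add_right le_rfl)
  have hQρ : Q ≪ ρ := Measure.absolutelyContinuous_of_le (Measure.le_add_left le_rfl)
  set p := P.rnDeriv ρ with hpdef
  set q := Q.rnDeriv ρ with hqdef
  have hpm : Measurable p := Measure.measurable_rnDeriv P ρ
  have hqm : Measurable q := Measure.measurable_rnDeriv Q ρ
  have hp : ρ.withDensity p = P := Measure.withDensity_rnDeriv_eq P ρ hPρ
  have hq : ρ.withDensity q = Q := Measure.withDensity_rnDeriv_eq Q ρ hQρ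
  have hip : ∫⁻ x, p x ∂ρ = 1 := by
    rw [Measure.lintegral_rnDeriv hPρ]; simp
  have hiq : ∫⁻ x, q x ∂ρ = 1 := by
    rw [Measure.lintegral_rnDeriv hQρ]; simp
  set t := ∫⁻ x, (p x - q x) ∂ρ with ht
  have htt' : t = ∫⁻ x, (q x - p x) ∂ρ :=
    aux_lintegral_tsub_comm hpm hqm (hip.trans hiq.symm) (hip ▸ one_ne_top)
  have ht1 : t ≤ 1 := by
    rw [ht, ← hip]; exact lintegral_mono fun x => tsub_le_self
  have htop : t ≠ ⊤ := ne_top_of_le_ne_top one_ne_top ht1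
  have htvd : tvDist P Q = t := by
    conv_lhs => rw [← hp, ← hq]
    exact aux_tvDist_withDensity hpm hqm (hiq ▸ one_ne_top)
  rw [htvd]
  have hdiagm : Measurable (fun x : M => (x, x)) := measurable_id.prodMk measurable_id
  by_cases ht0 : t = 0
  · -- P = Q, use diagonal coupling
    have hp0 : p =ᵐ[ρ] q := by
      have h1 : (fun x => p x - q x) =ᵐ[ρ] 0 := by
        rw [← lintegral_eq_zero_iff (f := fun x => p x - q x) (hpm.sub hqm)]; exact ht0
      have h2 : (fun x => q x - p x) =ᵐ[ρ] 0 := by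
        rw [← lintegral_eq_zero_iff (f := fun x => q x - p x) (hqm.sub hpm)]; rw [← htt']; exact ht0
      filter_upwards [h1, h2] with x e1 e2
      exact le_antisymm (tsub_eq_zero_iff_le.1 e1) (tsub_eq_zero_iff_le.1 e2)
    have hPQ : P = Q := by rw [← hp, ← hq]; exact withDensity_congr_ae hp0
    set π : Measure (M × M) := P.map (fun x => (x, x)) with hπ
    have h1 : π.map Prod.fst = P := by
      rw [hπ, Measure.map_map measurable_fst hdiagm]
      exact Measure.map_id
    have h2 : π.map Prod.snd = Q := by
      rw [hπ, Measure.map_map measurable_snd hdiagm, ← hPQ]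
      exact Measure.map_id
    have hcost : ∫⁻ x : M × M, edist x.1 x.2 ∂π ≤ 0 := by
      refine le_trans (lintegral_map_le _ _) ?_
      simp
    exact le_trans (iInf₂_le π ⟨h1, h2⟩) (le_trans hcost (by simp))
  · set lm := ρ.withDensity (fun x => p x ⊓ q x) with hlm
    set wp := ρ.withDensity (fun x => p x - q x) with hwp
    set wq := ρ.withDensity (fun x => q x - p x) with hwq
    have hwpu : wp Set.univ = t := by rw [hwp, withDensity_apply _ MeasurableSet.univ]; simp [ht]
    have hwqu : wq Set.univ = t := by
      rw [hwq, withDensity_apply _ MeasurableSet.univ, htt']; simp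
    have hwpfin : IsFiniteMeasure wp := ⟨by rw [hwpu]; exact lt_of_le_of_lt ht1 one_lt_top⟩
    have hwqfin : IsFiniteMeasure wq := ⟨by rw [hwqu]; exact lt_of_le_of_lt ht1 one_lt_top⟩
    have hlmfin : IsFiniteMeasure lm := by
      constructor
      rw [hlm, withDensity_apply _ MeasurableSet.univ]
      refine lt_of_le_of_lt ?_ ENNReal.one_lt_top
      rw [Measure.restrict_univ, ← hip]
      exact lintegral_mono fun x => inf_le_left
    set π : Measure (M × M) := lm.map (fun x => (x, x)) + t⁻¹ • (wp.prod wq) with hπ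
    have hlwp : lm + wp = P := by
      rw [hlm, hwp, ← withDensity_add_right _ (g := fun x => p x - q x) (hpm.sub hqm), ← hp]
      exact congrArg _ (funext fun x => aux_min_add_tsub _ _)
    have hlwq : lm + wq = Q := by
      rw [hlm, hwq, ← withDensity_add_right _ (g := fun x => q x - p x) (hqm.sub hpm), ← hq]
      refine congrArg _ (funext fun x => ?_)
      show p x ⊓ q x + (q x - p x) = q x
      rw [inf_comm]; exact aux_min_add_tsub _ _
    have hdiagfst : (lm.map (fun x : M => (x, x))).map Prod.fst = lm := by
      rw [Measure.map_map measurable_fst hdiagm]; exact Measure.map_id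
    have hdiagsnd : (lm.map (fun x : M => (x, x))).map Prod.snd = lm := by
      rw [Measure.map_map measurable_snd hdiagm]; exact Measure.map_id
    have h1 : π.map Prod.fst = P := by
      rw [hπ, Measure.map_add _ _ measurable_fst, Measure.map_smul, hdiagfst,
        Measure.map_fst_prod, hwqu, smul_smul, ENNReal.inv_mul_cancel ht0 htop, one_smul, hlwp]
    have h2 : π.map Prod.snd = Q := by
      rw [hπ, Measure.map_add _ _ measurable_snd, Measure.map_smul, hdiagsnd,
        Measure.map_snd_prod, hwpu, smul_smul, ENNReal.inv_mul_cancel ht0 htop, one_smul, hlwq]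
    have hcost : ∫⁻ x : M × M, edist x.1 x.2 ∂π ≤ d * t := by
      rw [hπ, lintegral_add_measure, lintegral_smul_measure]
      have c1 : ∫⁻ x : M × M, edist x.1 x.2 ∂(lm.map (fun x => (x, x))) ≤ 0 := by
        refine le_trans (lintegral_map_le _ _) ?_
        simp
      have c2 : ∫⁻ x : M × M, edist x.1 x.2 ∂(wp.prod wq) ≤ d * t * t := by
        calc ∫⁻ x : M × M, edist x.1 x.2 ∂(wp.prod wq)
            ≤ ∫⁻ _ : M × M, d ∂(wp.prod wq) :=
              lintegral_mono fun x => EMetric.edist_le_diam_of_mem (Set.mem_univ _) (Set.mem_univ _)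
          _ = d * ((wp.prod wq) Set.univ) := lintegral_const d
          _ = d * t * t := by
              rw [← Set.univ_prod_univ, Measure.prod_prod, hwpu, hwqu, mul_assoc]
      calc ∫⁻ x : M × M, edist x.1 x.2 ∂(lm.map (fun x => (x, x)))
            + t⁻¹ * ∫⁻ x : M × M, edist x.1 x.2 ∂(wp.prod wq)
          ≤ 0 + t⁻¹ * (d * t * t) := by gcongr
        _ = d * t := by
            rw [zero_add, show d * t * t = t * (d * t) by ring, ← mul_assoc,
              ENNReal.inv_mul_cancel ht0 htop, one_mul]
    exact le_trans (iInf₂_le π ⟨h1, h2⟩) hcost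

end AuxiliaryLemmas

/-- If f factors through κ, the Wasserstein distance of pushforwards under f is
bounded via the KL divergence of pushforwards under κ. -/
theorem W1_pushforward_bound {X A M : Type*} [MeasurableSpace X] [MeasurableSpace A]
    [MetricSpace M] [MeasurableSpace M]
    (β : ℝ≥0∞) (hfin : β ≠ ⊤) (hβ : EMetric.diam (Set.univ : Set M) = β)
    (f : X → M) (κ : X → A) (g : A → M)
    (hf : Measurable f) (hκ : Measurable κ) (hg : Measurable g) (hfac : f = g ∘ κ)
    (μ ν : Measure X) [IsProbabilityMeasure μ] [IsProbabilityMeasure ν] :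
    W1 (μ.map f) (ν.map f) ≤
      β * (min (klDiv (μ.map κ) (ν.map κ) / 2)
               (1 - expNeg (klDiv (μ.map κ) (ν.map κ)))) ^ (1/2 : ℝ) := by
  set P := μ.map κ with hP
  set Q := ν.map κ with hQ
  have hPprob : IsProbabilityMeasure P := Measure.isProbabilityMeasure_map hκ.aemeasurable
  have hQprob : IsProbabilityMeasure Q := Measure.isProbabilityMeasure_map hκ.aemeasurable
  have hPfprob : IsProbabilityMeasure (μ.map f) := Measure.isProbabilityMeasure_map hf.aemeasurable
  have hQfprob : IsProbabilityMeasure (ν.map f) := Measure.isProbabilityMeasure_map hf.aemeasurable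
  have hmapμ : μ.map f = P.map g := by
    rw [hP, Measure.map_map hg hκ, ← hfac]
  have hmapν : ν.map f = Q.map g := by
    rw [hQ, Measure.map_map hg hκ, ← hfac]
  have step1 : W1 (μ.map f) (ν.map f) ≤ β * tvDist (μ.map f) (ν.map f) := by
    rw [← hβ]
    exact aux_W1_le_diam_mul_tvDist _ _
  have step2 : tvDist (μ.map f) (ν.map f) ≤ tvDist P Q := by
    rw [hmapμ, hmapν]
    exact aux_tvDist_map_le g hg
  have step3 : tvDist P Q ≤
      (min (klDiv P Q / 2) (1 - expNeg (klDiv P Q))) ^ (1/2 : ℝ) := by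
    by_cases h : P ≪ Q ∧ Integrable (fun x => Real.log ((P.rnDeriv Q x).toReal)) P
    · obtain ⟨hknn, hpin, hbh⟩ := aux_tv_le_pinsker_BH P Q h.1 h.2
      set k := ∫ x, Real.log ((P.rnDeriv Q x).toReal) ∂P with hk
      have hkl : klDiv P Q = ENNReal.ofReal k := by simp only [klDiv]; rw [if_pos h]
      have hexp : expNeg (klDiv P Q) = ENNReal.ofReal (Real.exp (-k)) := by
        rw [hkl]; simp only [expNeg]; rw [if_neg ENNReal.ofReal_ne_top, ENNReal.toReal_ofReal hknn]
      rw [hexp, hkl]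
      rcases min_cases (ENNReal.ofReal k / 2)
        (1 - ENNReal.ofReal (Real.exp (-k))) with ⟨hmin, _⟩ | ⟨hmin, _⟩
      · rw [hmin]; exact hpin
      · rw [hmin]; exact hbh
    · have hkl : klDiv P Q = ⊤ := by simp only [klDiv]; rw [if_neg h]
      rw [hkl]
      have hexp : expNeg (⊤ : ℝ≥0∞) = 0 := by simp [expNeg]
      have htop2 : (⊤ : ℝ≥0∞) / 2 = ⊤ := ENNReal.top_div_of_ne_top ENNReal.ofNat_ne_top
      rw [hexp, htop2, tsub_zero, min_eq_right le_top, ENNReal.one_rpow]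
      exact aux_tvDist_le_one
  calc W1 (μ.map f) (ν.map f) ≤ β * tvDist (μ.map f) (ν.map f) := step1
    _ ≤ β * tvDist P Q := mul_le_mul_right step2 β
    _ ≤ β * (min (klDiv P Q / 2) (1 - expNeg (klDiv P Q))) ^ (1/2 : ℝ) :=
        mul_le_mul_right step3 β
end
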